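/- arXiv:1905.08294 — 2 statements merged into one kernel-verified Lean document; each statement's English description precedes it below -/
import Mathlib

section
/- If a complete theory T satisfies the MS-criterion, then there exist distinct complete types p(x;y) ≠ q(x;y) over ∅ with p ⟶ q and q ⟶ p; in particular, T is not equational. -/
open FirstOrder FirstOrder.Language Set

universe u v w

namespace Equationality

variable {L : FirstOrder.Language.{u, v}}

section Struc
variable {M : Type w} [L.Structure M]

/-- The instance of the formula `φ(x; y)` at the parameter tuple `b`. -/
def instSet {α β : Type*} (φ : L.Formula (α ⊕ β)) (b : β → M) : Set (α → M) :=
  {a | φ.Realize (Sum.elim a b)}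

/-- A sequence of `γ`-tuples indexed by a linear order is indiscernible if any two strictly
increasing finite subsequences satisfy the same formulas. -/
def IsIndiscernible {I : Type*} [LinearOrder I] {γ : Type*} (a : I → γ → M) : Prop :=
  ∀ (n : ℕ) (i j : Fin n → I), StrictMono i → StrictMono j →
    ∀ φ : L.Formula (Fin n × γ),
      φ.Realize (fun p => a (i p.1) p.2) ↔ φ.Realize (fun p => a (j p.1) p.2)

/-- The complete type of a tuple over `∅`, as the set of formulas it realizes. -/
def typeOf {γ : Type*} (a : γ → M) : Set (L.Formula γ) := {φ | φ.Realize a}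

end Struc

variable (T : L.Theory)

/-- `φ(x; y)` is an equation for `T`: in every model of `T`, the family of finite
intersections of instances of `φ` has the descending chain condition. -/
def IsEquation {α β : Type*} (φ : L.Formula (α ⊕ β)) : Prop :=
  ∀ (M : Theory.ModelType.{u, v, max u v} T) (B : ℕ → Finset (β → M)),
    (Antitone fun n => ⋂ b ∈ B n, instSet φ b) →
    ∃ N, ∀ n, N ≤ n → (⋂ b ∈ B n, instSet φ b) = ⋂ b ∈ B N, instSet φ b

/-- A complete type over `∅` (in the variables `γ`), presented as the set of formulas
realized by some tuple in some model of `T`. -/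
def IsRealizedType {γ : Type*} (p : Set (L.Formula γ)) : Prop :=
  ∃ (M : Theory.ModelType.{u, v, max u v} T) (a : γ → M), typeOf a = p

/-- `p ⟶ q`: there are a model of `T`, a tuple `b` and an indiscernible sequence `(aᵢ)`
with `aᵢ ⊨ p(x, b)` for `i > 0` and `a₀ ⊨ q(x, b)`. -/
def Pf {α β : Type*} (p q : Set (L.Formula (α ⊕ β))) : Prop :=
  ∃ (M : Theory.ModelType.{u, v, max u v} T) (b : β → M) (a : ℕ → α → M),
    IsIndiscernible (L := L) a ∧ (∀ i : ℕ, 0 < i → typeOf (Sum.elim (a i) b) = p) ∧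
      typeOf (Sum.elim (a 0) b) = q

/-- Boolean combinations of equations for `T`. -/
inductive IsBoolCombOfEquations {α β : Type*} :
    L.Formula (α ⊕ β) → Prop
  | of_equation (φ : L.Formula (α ⊕ β)) : IsEquation T φ → IsBoolCombOfEquations φ
  | not (φ : L.Formula (α ⊕ β)) : IsBoolCombOfEquations φ → IsBoolCombOfEquations φ.not
  | inf (φ ψ : L.Formula (α ⊕ β)) :
      IsBoolCombOfEquations φ → IsBoolCombOfEquations ψ → IsBoolCombOfEquations (φ ⊓ ψ)
  | sup (φ ψ : L.Formula (α ⊕ β)) :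
      IsBoolCombOfEquations φ → IsBoolCombOfEquations ψ → IsBoolCombOfEquations (φ ⊔ ψ)

/-- `T` is equational if every formula `ψ(x; y)` (in finite tuples of variables) is equivalent
modulo `T` to a Boolean combination of equations `φ(x; y)`. -/
def IsEquational : Prop :=
  ∀ (n m : ℕ) (ψ : L.Formula (Fin n ⊕ Fin m)),
    ∃ χ : L.Formula (Fin n ⊕ Fin m), IsBoolCombOfEquations T χ ∧ T.Iff ψ χ

/-- Infinite Ramsey theorem, in "strictly monotone tuples" form. -/
theorem exists_homog : ∀ {k : ℕ} (c : (Fin k → ℕ) → Bool),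
    ∃ g : ℕ → ℕ, StrictMono g ∧ ∀ s t : Fin k → ℕ, StrictMono s → StrictMono t →
      c (g ∘ s) = c (g ∘ t) := by
  intro k
  induction k with
  | zero =>
    intro c
    refine ⟨id, strictMono_id, fun s t _ _ => ?_⟩
    congr 1
    funext i
    exact i.elim0
  | succ k IH =>
    intro c
    -- one refinement step
    have IH' : ∀ f : {f : ℕ → ℕ // StrictMono f}, ∃ g : {g : ℕ → ℕ // StrictMono g},
        ∀ s t : Fin k → ℕ, StrictMono s → StrictMono t →
          c (Fin.cons (f.1 0) (fun i => f.1 (g.1 (s i) + 1))) =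
          c (Fin.cons (f.1 0) (fun i => f.1 (g.1 (t i) + 1))) := by
      intro f
      obtain ⟨g, hg, hgc⟩ := IH (fun v => c (Fin.cons (f.1 0) (fun i => f.1 (v i + 1))))
      exact ⟨⟨g, hg⟩, fun s t hs ht => hgc s t hs ht⟩
    choose step hstep using IH'
    -- the sequence of refinements
    let F : ℕ → {f : ℕ → ℕ // StrictMono f} := fun m =>
      Nat.rec ⟨id, strictMono_id⟩
        (fun _ f => ⟨fun t => f.1 ((step f).1 t + 1),
          f.2.comp (fun a b hab => by simpa using (step f).2 hab)⟩) m
    have hFsucc : ∀ m t, (F (m + 1)).1 t = (F m).1 ((step (F m)).1 t + 1) := fun _ _ => rfl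
    set x : ℕ → ℕ := fun m => (F m).1 0 with hx
    -- key property
    have P1 : ∀ (m : ℕ) (s t : Fin k → ℕ), StrictMono s → StrictMono t →
        c (Fin.cons (x m) (fun i => (F (m+1)).1 (s i))) =
        c (Fin.cons (x m) (fun i => (F (m+1)).1 (t i))) := by
      intro m s t hs ht
      have := hstep (F m) s t hs ht
      simpa [hFsucc] using this
    -- ranges are nested
    have P2 : ∀ (m d : ℕ) (t : ℕ), ∃ u, (F (m + 1 + d)).1 t = (F (m + 1)).1 u := by
      intro m d
      induction d with
      | zero => exact fun t => ⟨t, rfl⟩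
      | succ d IH2 =>
        intro t
        obtain ⟨u, hu⟩ := IH2 ((step (F (m + 1 + d))).1 t + 1)
        exact ⟨u, by rw [show m + 1 + (d+1) = (m + 1 + d) + 1 from rfl, hFsucc]; exact hu⟩
    have hxmono : StrictMono x := by
      apply strictMono_nat_of_lt_succ
      intro m
      have : (F (m+1)).1 0 = (F m).1 ((step (F m)).1 0 + 1) := hFsucc m 0
      rw [hx]; simp only []
      rw [this]
      exact (F m).2 (Nat.succ_pos _)
    -- translate x-values at indices > m into range of F (m+1)
    have P3 : ∀ (m m' : ℕ), m < m' → ∃ u, x m' = (F (m + 1)).1 u := by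
      intro m m' hmm
      obtain ⟨d, rfl⟩ := Nat.exists_eq_add_of_le (Nat.succ_le_of_lt hmm)
      exact P2 m d 0
    -- pigeonhole
    set e : ℕ → Bool := fun m => c (Fin.cons (x m) (fun i : Fin k => (F (m+1)).1 (i : ℕ))) with he
    have : ∃ b : Bool, {m | e m = b}.Infinite := by
      by_contra hcon
      push_neg at hcon
      have h1 := (hcon true)
      have h2 := (hcon false)
      have : (Set.univ : Set ℕ).Finite := by
        refine Set.Finite.subset (h1.union h2) ?_
        intro m _
        rcases Bool.eq_false_or_eq_true (e m) with h | h
        · exact Or.inl h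
        · exact Or.inr h
      exact Set.infinite_univ this
    obtain ⟨b, hb⟩ := this
    have hbinf : (setOf fun m => e m = b).Infinite := hb
    set g : ℕ → ℕ := fun m => x (Nat.nth (fun m => e m = b) m) with hgdef
    have hgmono : StrictMono g := hxmono.comp (Nat.nth_strictMono hbinf)
    -- every strictly monotone (k+1)-tuple from g gets colour b
    have key : ∀ s : Fin (k+1) → ℕ, StrictMono s → c (g ∘ s) = b := by
      intro s hs
      set m : ℕ := Nat.nth (fun m => e m = b) (s 0) with hm
      have hem : e m = b := Nat.nth_mem_of_infinite hbinf (s 0)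
      -- decompose into cons form
      have hdec : g ∘ s = Fin.cons (x m) (fun i : Fin k => g (s i.succ)) := by
        funext i
        refine Fin.cases ?_ ?_ i
        · simp [hm]; rfl
        · intro j
          simp
      -- tail values come from F (m+1)
      have htail : ∀ i : Fin k, ∃ u, g (s i.succ) = (F (m+1)).1 u := by
        intro i
        refine P3 m _ ?_
        exact (Nat.nth_strictMono hbinf).comp hs |>.lt_iff_lt.2 (Fin.succ_pos i) |>.trans_le le_rfl
      choose u hu using htail
      have humono : StrictMono u := by
        intro i j hij
        have h1 : g (s i.succ) < g (s j.succ) :=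
          hgmono (hs (Fin.succ_lt_succ_iff.2 hij))
        rw [hu i, hu j] at h1
        exact (F (m+1)).2.lt_iff_lt.1 h1
      have hcanon : StrictMono (fun i : Fin k => (i : ℕ)) := fun i j h => h
      calc c (g ∘ s) = c (Fin.cons (x m) (fun i => (F (m+1)).1 (u i))) := by
            rw [hdec]; congr 1; funext i
            refine Fin.cases rfl (fun j => ?_) i
            simp [hu j]
        _ = c (Fin.cons (x m) (fun i : Fin k => (F (m+1)).1 (i : ℕ))) :=
            P1 m u _ humono hcanon
        _ = b := hem
    exact ⟨g, hgmono, fun s t hs ht => (key s hs).trans (key t ht).symm⟩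


/-- Compactness with constants: if every finite subset of a set `A` of formulas with
variables `γ` can be realized in a model of `T`, then all of `A` can be simultaneously
realized in a model of `T`. -/
theorem compactness_con {γ : Type (max u v)} (T : L.Theory) (A : Set (L.Formula γ))
    (hfin : ∀ s : Finset (L.Formula γ), ↑s ⊆ A →
      ∃ (M : Theory.ModelType.{u, v, max u v} T) (vv : γ → M), ∀ χ ∈ s, χ.Realize vv) :
    ∃ (N : Theory.ModelType.{u, v, max u v} T) (vv : γ → N), ∀ χ ∈ A, χ.Realize vv := by
  classical
  set SS : L[[γ]].Theory :=
    (L.lhomWithConstants γ).onTheory T ∪ (Formula.equivSentence '' A) with hSS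
  have hsat : SS.IsSatisfiable := by
    rw [Theory.isSatisfiable_iff_isFinitelySatisfiable]
    intro T0 hT0
    -- extract the formula part
    set s : Finset (L.Formula γ) :=
      (T0.image Formula.equivSentence.symm).filter (· ∈ A) with hs
    have hsA : ↑s ⊆ A := by
      intro χ hχ
      simp only [hs, Finset.coe_filter, Set.mem_setOf_eq] at hχ
      exact hχ.2
    obtain ⟨M, vv, hvv⟩ := hfin s hsA
    letI : (constantsOn γ).Structure M := constantsOn.structure vv
    have hMT : (M : Type (max u v)) ⊨ (L.lhomWithConstants γ).onTheory T :=
      (LHom.onTheory_model _ _).2 inferInstance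
    have hmodel : (M : Type (max u v)) ⊨ (↑T0 : L[[γ]].Theory) := by
      refine ⟨fun σ hσ => ?_⟩
      rcases hT0 hσ with h | h
      · exact hMT.realize_of_mem σ h
      · obtain ⟨χ, hχA, rfl⟩ := h
        have hχs : χ ∈ s := by
          simp only [hs, Finset.mem_filter, Finset.mem_image]
          exact ⟨⟨_, hσ, by simp⟩, hχA⟩
        have := hvv χ hχs
        have h2 := (Formula.realize_equivSentence_symm (M := M) (Formula.equivSentence χ) vv)
        rw [Equiv.symm_apply_apply] at h2
        exact h2.1 this
    exact ⟨Theory.ModelType.of _ M⟩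
  obtain ⟨N0⟩ := hsat
  have hmod : (N0 : Type (max u v)) ⊨ (L.lhomWithConstants γ).onTheory T :=
    N0.is_model.mono Set.subset_union_left
  letI : L.Structure N0 := (L.lhomWithConstants γ).reduct N0
  haveI : (L.lhomWithConstants γ).IsExpansionOn N0 := LHom.isExpansionOn_reduct _ _
  haveI : (N0 : Type (max u v)) ⊨ T := (LHom.onTheory_model _ _).1 hmod
  refine ⟨⟨N0⟩, fun g => ((L.con g : N0)), fun χ hχ => ?_⟩
  have hσ : Formula.equivSentence χ ∈ SS := Or.inr ⟨χ, hχ, rfl⟩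
  have := N0.is_model.realize_of_mem _ hσ
  exact (Formula.realize_equivSentence _ _).1 this


section Part2

variable {α : Type*} {β : Type*}

/-- The type of constants for the compactness construction. -/
abbrev Gam (α : Type u_1) (β : Type u_2) : Type (max u_1 u_2) := (ℕ × α) ⊕ ((ℕ × α) ⊕ β)

/-- relabeling sending `(x, y)` to `(F_i x, W y)`. -/
def rF (i : ℕ) : (α ⊕ β) → Gam α β := Sum.elim (fun x => .inl (i, x)) (fun y => .inr (.inr y))

def rG (i : ℕ) : (α ⊕ β) → Gam α β :=
  Sum.elim (fun x => .inr (.inl (i, x))) (fun y => .inr (.inr y))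

def sF {k : ℕ} (i : Fin k → ℕ) : (Fin k × α) → Gam α β := fun p => .inl (i p.1, p.2)

def sG {k : ℕ} (i : Fin k → ℕ) : (Fin k × α) → Gam α β := fun p => .inr (.inl (i p.1, p.2))

/-- The axiom set for the compactness construction. -/
def Ax2 (φ : L.Formula (α ⊕ β)) : Set (L.Formula (Gam α β)) :=
  {χ | ∃ (k : ℕ) (i j : Fin k → ℕ) (ψ : L.Formula (Fin k × α)), StrictMono i ∧ StrictMono j ∧
      χ = (ψ.relabel (sF i)).iff (ψ.relabel (sF j))} ∪
  {χ | ∃ (k : ℕ) (i j : Fin k → ℕ) (ψ : L.Formula (Fin k × α)), StrictMono i ∧ StrictMono j ∧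
      χ = (ψ.relabel (sG i)).iff (ψ.relabel (sG j))} ∪
  {χ | ∃ (i : ℕ) (ψ : L.Formula (α ⊕ β)), 1 ≤ i ∧
      χ = (ψ.relabel (rF i)).iff (ψ.relabel (rF 1))} ∪
  {χ | ∃ (i : ℕ) (ψ : L.Formula (α ⊕ β)), 1 ≤ i ∧
      χ = (ψ.relabel (rG i)).iff (ψ.relabel (rG 1))} ∪
  {χ | ∃ ψ : L.Formula (α ⊕ β), χ = (ψ.relabel (rF 1)).iff (ψ.relabel (rG 0))} ∪
  {χ | ∃ ψ : L.Formula (α ⊕ β), χ = (ψ.relabel (rF 0)).iff (ψ.relabel (rG 1))} ∪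
  {φ.relabel (rG 0), (φ.relabel (rG 1)).not}

variable {M : Type w} [L.Structure M]

/-- The assignment of the constants in the original matrix model. -/
def asg (A : ℕ → ℕ → α → M) (B : ℕ → ℕ → β → M) (h : ℕ → ℕ) (n : ℕ) : Gam α β → M
  | .inl (m, x) =>
      if m = 0 then A (h (2*n)) (h (2*n+2)) x else A (h (2*(n-m))) (h (2*(n-m)+1)) x
  | .inr (.inl (m, x)) => A (h (2*n)) (h (2*n+1+m)) x
  | .inr (.inr y) => B (h (2*n)) (h (2*n+1)) y

lemma asg_comp (A : ℕ → ℕ → α → M) (B : ℕ → ℕ → β → M) (g h : ℕ → ℕ) (n : ℕ) :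
    asg (fun i j => A (g i) (g j)) (fun i j => B (g i) (g j)) h n = asg A B (g ∘ h) n := by
  funext z
  rcases z with ⟨m, x⟩ | ⟨⟨m, x⟩ | y⟩ <;> simp [asg]

lemma strictMono_fin_cons {k : ℕ} {x : ℕ} {f : Fin k → ℕ} (hf : StrictMono f)
    (hx : ∀ t, x < f t) : StrictMono (Fin.cons x f : Fin (k+1) → ℕ) := by
  intro a b hab
  rcases Fin.eq_zero_or_eq_succ b with rfl | ⟨t, rfl⟩
  · exact absurd hab (by simp)
  · rcases Fin.eq_zero_or_eq_succ a with rfl | ⟨s, rfl⟩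
    · simpa using hx t
    · simp only [Fin.cons_succ]
      exact hf (Fin.succ_lt_succ_iff.1 hab)


lemma realize_iff_relabel {δ γ : Type*} (ψ : L.Formula δ) (r r' : δ → γ) (vv : γ → M) :
    ((ψ.relabel r).iff (ψ.relabel r')).Realize vv ↔
      (ψ.Realize (vv ∘ r) ↔ ψ.Realize (vv ∘ r')) := by
  rw [Formula.realize_iff, Formula.realize_relabel, Formula.realize_relabel]

lemma sm2 {a b : ℕ} (h1 : a < b) : StrictMono ![a, b] := by
  intro x y hxy
  fin_cases x <;> fin_cases y <;> simp_all [Fin.lt_def] <;> omega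

lemma sm3 {a b c : ℕ} (h1 : a < b) (h2 : b < c) : StrictMono ![a, b, c] := by
  intro x y hxy
  fin_cases x <;> fin_cases y <;> simp_all [Fin.lt_def] <;> omega

lemma sm4 {a b c d : ℕ} (h1 : a < b) (h2 : b < c) (h3 : c < d) : StrictMono ![a, b, c, d] := by
  intro x y hxy
  fin_cases x <;> fin_cases y <;> simp_all [Fin.lt_def] <;> omega

/-- Positions of matrix entries in the window. -/
def pos (n m r : ℕ) : ℕ := if m = 0 then 2*n + 2*r else 2*(n-m) + r

/-- The window tuple for the `F`-sequence indiscernibility axioms. -/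
def wF {k : ℕ} (n : ℕ) (i : Fin k → ℕ) : Fin (2*k) → ℕ := fun t =>
  pos n (i ⟨k - 1 - (t : ℕ)/2, by have := t.isLt; omega⟩) ((t : ℕ) % 2)

lemma pos_lt_pos {n mA mB rA rB : ℕ} (hA : mA ≤ n)
    (h : mB < mA ∨ (mA = mB ∧ rA < rB)) (hrA : rA < 2) (hrB : rB < 2) :
    pos n mA rA < pos n mB rB := by
  rcases h with h | ⟨rfl, h⟩ <;> unfold pos <;> split_ifs <;> omega

lemma wF_strictMono {k : ℕ} {n : ℕ} {i : Fin k → ℕ} (hi : StrictMono i)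
    (hbnd : ∀ t, i t ≤ n) : StrictMono (wF n i) := by
  intro a b hab
  have ha := a.isLt
  have hb := b.isLt
  have hab' : (a : ℕ) < (b : ℕ) := hab
  refine pos_lt_pos (hbnd _) ?_ (by omega) (by omega)
  rcases Nat.lt_or_ge ((a : ℕ)/2) ((b : ℕ)/2) with hdiv | hdiv
  · left
    exact hi (Fin.mk_lt_mk.2 (by omega))
  · right
    constructor
    · exact congrArg i (Fin.ext (show k - 1 - (a : ℕ)/2 = k - 1 - (b : ℕ)/2 by omega))
    · omega

lemma wF_eval0 {k : ℕ} (n : ℕ) (i : Fin k → ℕ) (p1 : Fin k)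
    (pf : 2*(k - 1 - (p1 : ℕ)) < 2*k) :
    wF n i ⟨2*(k - 1 - (p1 : ℕ)), pf⟩ = pos n (i p1) 0 := by
  have hI : (⟨k - 1 - ((2*(k - 1 - (p1 : ℕ)))/2), by have := p1.isLt; omega⟩ : Fin k) = p1 :=
    Fin.ext (show k - 1 - ((2*(k - 1 - (p1 : ℕ)))/2) = (p1 : ℕ) by have := p1.isLt; omega)
  show pos n (i _) ((2*(k - 1 - (p1 : ℕ))) % 2) = pos n (i p1) 0
  rw [hI, Nat.mul_mod_right]

lemma wF_eval1 {k : ℕ} (n : ℕ) (i : Fin k → ℕ) (p1 : Fin k)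
    (pf : 2*(k - 1 - (p1 : ℕ)) + 1 < 2*k) :
    wF n i ⟨2*(k - 1 - (p1 : ℕ)) + 1, pf⟩ = pos n (i p1) 1 := by
  have hI : (⟨k - 1 - ((2*(k - 1 - (p1 : ℕ)) + 1)/2), by have := p1.isLt; omega⟩ : Fin k) = p1 :=
    Fin.ext (show k - 1 - ((2*(k - 1 - (p1 : ℕ)) + 1)/2) = (p1 : ℕ) by have := p1.isLt; omega)
  show pos n (i _) ((2*(k - 1 - (p1 : ℕ)) + 1) % 2) = pos n (i p1) 1
  rw [hI]
  congr 1
  omega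

section SingleAxiom

variable (A : ℕ → ℕ → α → M) (B : ℕ → ℕ → β → M)

lemma asg_rG (h : ℕ → ℕ) (n i : ℕ) :
    (asg A B h n) ∘ (rG i) = Sum.elim (fun x => A (h (2*n)) (h (2*n+1+i)) x)
      (fun y => B (h (2*n)) (h (2*n+1)) y) := by
  funext z; rcases z with x | y <;> rfl

lemma asg_rF_pos (h : ℕ → ℕ) (n i : ℕ) (hi : i ≠ 0) :
    (asg A B h n) ∘ (rF i) = Sum.elim (fun x => A (h (2*(n-i))) (h (2*(n-i)+1)) x)
      (fun y => B (h (2*n)) (h (2*n+1)) y) := by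
  funext z; rcases z with x | y
  · show (if i = 0 then _ else _) = _
    rw [if_neg hi]
    rfl
  · rfl

lemma asg_rF_zero (h : ℕ → ℕ) (n : ℕ) :
    (asg A B h n) ∘ (rF 0) = Sum.elim (fun x => A (h (2*n)) (h (2*n+2)) x)
      (fun y => B (h (2*n)) (h (2*n+1)) y) := by
  funext z; rcases z with x | y <;> rfl

variable (φ : L.Formula (α ⊕ β))

lemma single_axiom
    (hyp1 : ∀ i j l : ℕ, φ.Realize (Sum.elim (A i j) (B i l)) ↔ j = l)
    (hyp2 : ∀ i j k l : ℕ, i < k → j < l →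
      typeOf (L := L) (Sum.elim (A i j) (B i j)) = typeOf (Sum.elim (A i j) (B k l)))
    (χ : L.Formula (Gam α β)) (hχ : χ ∈ Ax2 φ) :
    ∃ g : ℕ → ℕ, StrictMono g ∧ ∃ Bd : ℕ, ∀ g' : ℕ → ℕ, StrictMono g' → ∀ n, Bd ≤ n →
      χ.Realize (asg A B (g ∘ g') n) := by
  classical
  rcases hχ with ((((((hc | hc) | hc) | hc) | hc) | hc) | hc)
  · -- IndF
    obtain ⟨k, i, j, ψ, hi, hj, rfl⟩ := hc
    obtain ⟨g, hg, hconst⟩ := exists_homog (fun w : Fin (2*k) → ℕ =>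
      decide (ψ.Realize (fun p : Fin k × α =>
        A (w ⟨2*(k - 1 - (p.1 : ℕ)), by have := p.1.isLt; omega⟩)
          (w ⟨2*(k - 1 - (p.1 : ℕ)) + 1, by have := p.1.isLt; omega⟩) p.2)))
    refine ⟨g, hg, (Finset.univ.sup i) + (Finset.univ.sup j) + 1, fun g' hg' n hn => ?_⟩
    have hbi : ∀ t, i t ≤ n :=
      fun t => le_trans (Finset.le_sup (Finset.mem_univ t)) (by omega)
    have hbj : ∀ t, j t ≤ n :=
      fun t => le_trans (Finset.le_sup (Finset.mem_univ t)) (by omega)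
    rw [realize_iff_relabel]
    have key := hconst (g' ∘ wF n i) (g' ∘ wF n j)
      (hg'.comp (wF_strictMono hi hbi)) (hg'.comp (wF_strictMono hj hbj))
    rw [decide_eq_decide] at key
    have hside : ∀ ii : Fin k → ℕ,
        ((asg A B (g ∘ g') n) ∘ (sF ii) : Fin k × α → M) = fun p : Fin k × α =>
          A ((g ∘ (g' ∘ wF n ii)) ⟨2*(k - 1 - (p.1 : ℕ)), by have := p.1.isLt; omega⟩)
            ((g ∘ (g' ∘ wF n ii)) ⟨2*(k - 1 - (p.1 : ℕ)) + 1, by have := p.1.isLt; omega⟩)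
            p.2 := by
      intro ii
      funext p
      show (if ii p.1 = 0 then A ((g ∘ g') (2*n)) ((g ∘ g') (2*n+2)) p.2
        else A ((g ∘ g') (2*(n - ii p.1))) ((g ∘ g') (2*(n - ii p.1)+1)) p.2) = _
      simp only [Function.comp_apply, wF_eval0, wF_eval1]
      by_cases h0 : ii p.1 = 0
      · rw [if_pos h0, h0]
        simp [pos]
      · rw [if_neg h0]
        simp [pos, h0]
    rw [← hside i, ← hside j] at key
    exact key
  · -- IndG
    obtain ⟨k, i, j, ψ, hi, hj, rfl⟩ := hc
    obtain ⟨g, hg, hconst⟩ := exists_homog (fun w : Fin (k+1) → ℕ =>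
      decide (ψ.Realize (fun p : Fin k × α => A (w 0) (w p.1.succ) p.2)))
    refine ⟨g, hg, 0, fun g' hg' n _ => ?_⟩
    rw [realize_iff_relabel]
    have hsm : ∀ ii : Fin k → ℕ, StrictMono ii →
        StrictMono (Fin.cons (2*n) (fun t => 2*n+1+ ii t) : Fin (k+1) → ℕ) := by
      intro ii hii
      refine strictMono_fin_cons ?_ (fun t => by omega)
      intro a b hab
      have := hii hab
      show 2*n+1+ ii a < 2*n+1+ ii b
      omega
    have key := hconst (g' ∘ Fin.cons (2*n) (fun t => 2*n+1+ i t))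
      (g' ∘ Fin.cons (2*n) (fun t => 2*n+1+ j t))
      (hg'.comp (hsm i hi)) (hg'.comp (hsm j hj))
    rw [decide_eq_decide] at key
    simp only [Function.comp_apply, Fin.cons_zero, Fin.cons_succ] at key
    have hside : ∀ ii : Fin k → ℕ,
        ((asg A B (g ∘ g') n) ∘ (sG ii) : Fin k × α → M) = fun p : Fin k × α =>
          A (g (g' (2*n))) (g (g' (2*n+1+ ii p.1))) p.2 := fun ii => rfl
    rw [← hside i, ← hside j] at key
    exact key
  · -- E1 : F i ≡ F 1
    obtain ⟨i, ψ, hi1, rfl⟩ := hc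
    obtain ⟨g, hg, hconst⟩ := exists_homog (fun w : Fin 4 → ℕ =>
      decide (ψ.Realize (Sum.elim (fun x => A (w 0) (w 1) x) (fun y => B (w 2) (w 3) y))))
    refine ⟨g, hg, i, fun g' hg' n hn => ?_⟩
    rw [realize_iff_relabel]
    have key := hconst (g' ∘ ![2*(n-i), 2*(n-i)+1, 2*n, 2*n+1])
      (g' ∘ ![2*(n-1), 2*(n-1)+1, 2*n, 2*n+1])
      (hg'.comp (sm4 (by omega) (by omega) (by omega)))
      (hg'.comp (sm4 (by omega) (by omega) (by omega)))
    rw [decide_eq_decide] at key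
    simp only [Function.comp_apply, Matrix.cons_val_zero, Matrix.cons_val_one,
      Matrix.head_cons, Matrix.cons_val_two, Matrix.cons_val_three, Matrix.tail_cons] at key
    rw [asg_rF_pos A B _ _ _ (by omega), asg_rF_pos A B _ _ _ (by omega)]
    exact key
  · -- E2 : G i ≡ G 1
    obtain ⟨i, ψ, hi1, rfl⟩ := hc
    obtain ⟨g, hg, hconst⟩ := exists_homog (fun w : Fin 3 → ℕ =>
      decide (ψ.Realize (Sum.elim (fun x => A (w 0) (w 2) x) (fun y => B (w 0) (w 1) y))))
    refine ⟨g, hg, 0, fun g' hg' n _ => ?_⟩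
    rw [realize_iff_relabel]
    have key := hconst (g' ∘ ![2*n, 2*n+1, 2*n+1+i]) (g' ∘ ![2*n, 2*n+1, 2*n+1+1])
      (hg'.comp (sm3 (by omega) (by omega))) (hg'.comp (sm3 (by omega) (by omega)))
    rw [decide_eq_decide] at key
    simp only [Function.comp_apply, Matrix.cons_val_zero, Matrix.cons_val_one,
      Matrix.head_cons, Matrix.cons_val_two, Matrix.tail_cons] at key
    rw [asg_rG A B, asg_rG A B]
    exact key
  · -- E3 : F 1 ≡ G 0
    obtain ⟨ψ, rfl⟩ := hc
    obtain ⟨g, hg, hconst⟩ := exists_homog (fun w : Fin 2 → ℕ =>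
      decide (ψ.Realize (Sum.elim (fun x => A (w 0) (w 1) x) (fun y => B (w 0) (w 1) y))))
    refine ⟨g, hg, 1, fun g' hg' n hn => ?_⟩
    rw [realize_iff_relabel]
    rw [asg_rF_pos A B _ _ _ (by omega), asg_rG A B]
    have hhm : StrictMono (g ∘ g') := hg.comp hg'
    have step1 : ψ.Realize (Sum.elim (fun x => A ((g ∘ g') (2*(n-1))) ((g ∘ g') (2*(n-1)+1)) x)
        (fun y => B ((g ∘ g') (2*n)) ((g ∘ g') (2*n+1)) y)) ↔
        ψ.Realize (Sum.elim (fun x => A ((g ∘ g') (2*(n-1))) ((g ∘ g') (2*(n-1)+1)) x)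
        (fun y => B ((g ∘ g') (2*(n-1))) ((g ∘ g') (2*(n-1)+1)) y)) :=
      (Set.ext_iff.1 (hyp2 ((g ∘ g') (2*(n-1))) ((g ∘ g') (2*(n-1)+1))
        ((g ∘ g') (2*n)) ((g ∘ g') (2*n+1)) (hhm (by omega)) (hhm (by omega))) ψ).symm
    have key := hconst (g' ∘ ![2*(n-1), 2*(n-1)+1]) (g' ∘ ![2*n, 2*n+1])
      (hg'.comp (sm2 (by omega))) (hg'.comp (sm2 (by omega)))
    rw [decide_eq_decide] at key
    simp only [Function.comp_apply, Matrix.cons_val_zero, Matrix.cons_val_one,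
      Matrix.head_cons] at key
    exact step1.trans key
  · -- E4 : F 0 ≡ G 1
    obtain ⟨ψ, rfl⟩ := hc
    refine ⟨id, strictMono_id, 0, fun g' hg' n _ => ?_⟩
    rw [realize_iff_relabel, asg_rF_zero A B, asg_rG A B]
  · -- E5a
    rcases hc with rfl | hc
    · refine ⟨id, strictMono_id, 0, fun g' hg' n _ => ?_⟩
      rw [Formula.realize_relabel]
      rw [show (asg A B (id ∘ g') n) ∘ (rG 0) = Sum.elim (fun x => A (g' (2*n)) (g' (2*n+1+0)) x)
        (fun y => B (g' (2*n)) (g' (2*n+1)) y) from asg_rG A B _ _ _]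
      exact (hyp1 _ _ _).2 rfl
    · rw [Set.mem_singleton_iff] at hc
      subst hc
      refine ⟨id, strictMono_id, 0, fun g' hg' n _ => ?_⟩
      rw [Formula.realize_not, Formula.realize_relabel]
      rw [show (asg A B (id ∘ g') n) ∘ (rG 1) = Sum.elim (fun x => A (g' (2*n)) (g' (2*n+1+1)) x)
        (fun y => B (g' (2*n)) (g' (2*n+1)) y) from asg_rG A B _ _ _]
      intro hcon
      have := (hyp1 _ _ _).1 hcon
      exact absurd (hg'.injective this) (by omega)

end SingleAxiom


section Assemble

variable (T : L.Theory) {α β : Type (max u v)}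

lemma Ax2_finite_realizable {M : Theory.ModelType.{u, v, max u v} T}
    (A : ℕ → ℕ → α → M) (B : ℕ → ℕ → β → M) (φ : L.Formula (α ⊕ β))
    (hyp1 : ∀ i j l : ℕ, φ.Realize (Sum.elim (A i j) (B i l)) ↔ j = l)
    (hyp2 : ∀ i j k l : ℕ, i < k → j < l →
      typeOf (L := L) (Sum.elim (A i j) (B i j)) = typeOf (Sum.elim (A i j) (B k l)))
    (s : Finset (L.Formula (Gam α β))) (hsub : ↑s ⊆ Ax2 φ) :
    ∃ g : ℕ → ℕ, StrictMono g ∧ ∃ Bd : ℕ, ∀ g' : ℕ → ℕ, StrictMono g' → ∀ n, Bd ≤ n →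
      ∀ χ ∈ s, χ.Realize (asg A B (g ∘ g') n) := by
  classical
  induction s using Finset.induction with
  | empty => exact ⟨id, strictMono_id, 0, fun g' hg' n _ χ hχ => absurd hχ (by simp)⟩
  | insert χ0 s0 hχ0 IH =>
    obtain ⟨g, hg, Bd, hgood⟩ := IH (fun x hx => hsub (Finset.mem_insert_of_mem hx))
    have hχ0mem : χ0 ∈ Ax2 φ := hsub (Finset.mem_insert_self _ _)
    obtain ⟨g1, hg1, Bd1, hax⟩ := single_axiom (fun i j => A (g i) (g j))
      (fun i j => B (g i) (g j)) φ
      (fun i j l => (hyp1 _ _ _).trans hg.injective.eq_iff)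
      (fun i j k l hik hjl => hyp2 _ _ _ _ (hg hik) (hg hjl)) χ0 hχ0mem
    refine ⟨g ∘ g1, hg.comp hg1, max Bd Bd1, fun g' hg' n hn χ hχ => ?_⟩
    rcases Finset.mem_insert.1 hχ with rfl | hχs
    · have := hax g' hg' n (le_trans (le_max_right _ _) hn)
      rwa [asg_comp] at this
    · exact hgood (g1 ∘ g') (hg1.comp hg') n (le_trans (le_max_left _ _) hn) χ hχs

theorem part2_main (φ : L.Formula (α ⊕ β))
    (h : ∃ (M : Theory.ModelType.{u, v, max u v} T)
        (a : ℕ → ℕ → α → M) (b : ℕ → ℕ → β → M),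
      (∀ i j l : ℕ, φ.Realize (Sum.elim (a i j) (b i l)) ↔ j = l) ∧
        ∀ i j k l : ℕ, i < k → j < l →
          typeOf (L := L) (Sum.elim (a i j) (b i j)) = typeOf (Sum.elim (a i j) (b k l))) :
    ∃ p q : Set (L.Formula (α ⊕ β)),
      IsRealizedType T p ∧ IsRealizedType T q ∧ p ≠ q ∧ Pf T p q ∧ Pf T q p := by
  obtain ⟨M, A, B, hyp1, hyp2⟩ := h
  have hfin : ∀ s : Finset (L.Formula (Gam α β)), ↑s ⊆ Ax2 φ →
      ∃ (M : Theory.ModelType.{u, v, max u v} T) (vv : Gam α β → M),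
        ∀ χ ∈ s, χ.Realize vv := by
    intro s hs
    obtain ⟨g, hg, Bd, hgood⟩ := Ax2_finite_realizable T A B φ hyp1 hyp2 s hs
    exact ⟨M, asg A B (g ∘ id) Bd, fun χ hχ => hgood id strictMono_id Bd le_rfl χ hχ⟩
  obtain ⟨N, vv, hall⟩ := compactness_con T (Ax2 φ) hfin
  set cF : ℕ → α → N := fun i x => vv (.inl (i, x)) with hcF
  set cG : ℕ → α → N := fun i x => vv (.inr (.inl (i, x))) with hcG
  set cW : β → N := fun y => vv (.inr (.inr y)) with hcW
  have hcompF : ∀ i, vv ∘ (rF i) = Sum.elim (cF i) cW := by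
    intro i; funext z; rcases z with x | y <;> rfl
  have hcompG : ∀ i, vv ∘ (rG i) = Sum.elim (cG i) cW := by
    intro i; funext z; rcases z with x | y <;> rfl
  -- the axioms, realized
  have hIndF : IsIndiscernible (L := L) cF := by
    intro k i j hi hj ψ
    have hmem : ((ψ.relabel (sF i)).iff (ψ.relabel (sF j))) ∈ Ax2 φ :=
      Or.inl (Or.inl (Or.inl (Or.inl (Or.inl (Or.inl ⟨k, i, j, ψ, hi, hj, rfl⟩)))))
    have := hall _ hmem
    rw [realize_iff_relabel] at this
    exact this
  have hIndG : IsIndiscernible (L := L) cG := by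
    intro k i j hi hj ψ
    have hmem : ((ψ.relabel (sG i)).iff (ψ.relabel (sG j))) ∈ Ax2 φ :=
      Or.inl (Or.inl (Or.inl (Or.inl (Or.inl (Or.inr ⟨k, i, j, ψ, hi, hj, rfl⟩)))))
    have := hall _ hmem
    rw [realize_iff_relabel] at this
    exact this
  have hE1 : ∀ i, 1 ≤ i → ∀ ψ : L.Formula (α ⊕ β),
      ψ.Realize (Sum.elim (cF i) cW) ↔ ψ.Realize (Sum.elim (cF 1) cW) := by
    intro i hi ψ
    have hmem : ((ψ.relabel (rF i)).iff (ψ.relabel (rF 1))) ∈ Ax2 φ :=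
      Or.inl (Or.inl (Or.inl (Or.inl (Or.inr ⟨i, ψ, hi, rfl⟩))))
    have := hall _ hmem
    rw [realize_iff_relabel, hcompF, hcompF] at this
    exact this
  have hE2 : ∀ i, 1 ≤ i → ∀ ψ : L.Formula (α ⊕ β),
      ψ.Realize (Sum.elim (cG i) cW) ↔ ψ.Realize (Sum.elim (cG 1) cW) := by
    intro i hi ψ
    have hmem : ((ψ.relabel (rG i)).iff (ψ.relabel (rG 1))) ∈ Ax2 φ :=
      Or.inl (Or.inl (Or.inl (Or.inr ⟨i, ψ, hi, rfl⟩)))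
    have := hall _ hmem
    rw [realize_iff_relabel, hcompG, hcompG] at this
    exact this
  have hE3 : ∀ ψ : L.Formula (α ⊕ β),
      ψ.Realize (Sum.elim (cF 1) cW) ↔ ψ.Realize (Sum.elim (cG 0) cW) := by
    intro ψ
    have hmem : ((ψ.relabel (rF 1)).iff (ψ.relabel (rG 0))) ∈ Ax2 φ :=
      Or.inl (Or.inl (Or.inr ⟨ψ, rfl⟩))
    have := hall _ hmem
    rw [realize_iff_relabel, hcompF, hcompG] at this
    exact this
  have hE4 : ∀ ψ : L.Formula (α ⊕ β),
      ψ.Realize (Sum.elim (cF 0) cW) ↔ ψ.Realize (Sum.elim (cG 1) cW) := by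
    intro ψ
    have hmem : ((ψ.relabel (rF 0)).iff (ψ.relabel (rG 1))) ∈ Ax2 φ :=
      Or.inl (Or.inr ⟨ψ, rfl⟩)
    have := hall _ hmem
    rw [realize_iff_relabel, hcompF, hcompG] at this
    exact this
  have hE5a : φ.Realize (Sum.elim (cG 0) cW) := by
    have hmem : (φ.relabel (rG 0)) ∈ Ax2 φ := Or.inr (Set.mem_insert _ _)
    have := hall _ hmem
    rw [Formula.realize_relabel, hcompG] at this
    exact this
  have hE5b : ¬ φ.Realize (Sum.elim (cG 1) cW) := by
    have hmem : ((φ.relabel (rG 1)).not) ∈ Ax2 φ :=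
      Or.inr (Set.mem_insert_of_mem _ rfl)
    have := hall _ hmem
    rw [Formula.realize_not, Formula.realize_relabel, hcompG] at this
    exact this
  refine ⟨typeOf (Sum.elim (cG 0) cW), typeOf (Sum.elim (cG 1) cW),
    ⟨N, _, rfl⟩, ⟨N, _, rfl⟩, ?_, ?_, ?_⟩
  · intro he
    have h0 : φ ∈ typeOf (L := L) (Sum.elim (cG 0) cW) := hE5a
    rw [he] at h0
    exact hE5b h0
  · exact ⟨N, cW, cF, hIndF,
      fun i hi => Set.ext fun ψ => (hE1 i hi ψ).trans (hE3 ψ),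
      Set.ext fun ψ => hE4 ψ⟩
  · exact ⟨N, cW, cG, hIndG, fun i hi => Set.ext fun ψ => hE2 i hi ψ, rfl⟩

end Assemble

end Part2

section Part3

variable (T : L.Theory) {α β : Type (max u v)}

abbrev Gam3 (α : Type u_1) (β : Type u_2) : Type (max u_1 u_2) := (ℕ × α) ⊕ (ℕ × β)

def mk3 (j n : ℕ) (ψ : L.Formula (α ⊕ β)) : L.Formula (Gam3 α β) :=
  ψ.relabel (Sum.elim (fun x => .inl (j, x)) (fun y => .inr (n, y)))

lemma realize_mk3 {M : Type w} [L.Structure M] (j n : ℕ) (ψ : L.Formula (α ⊕ β))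
    (vv : Gam3 α β → M) :
    (mk3 j n ψ).Realize vv ↔
      ψ.Realize (Sum.elim (fun x => vv (.inl (j, x))) (fun y => vv (.inr (n, y)))) := by
  rw [mk3, Formula.realize_relabel]
  have : vv ∘ (Sum.elim (fun x => (.inl (j, x) : Gam3 α β)) (fun y => .inr (n, y))) =
      Sum.elim (fun x => vv (.inl (j, x))) (fun y => vv (.inr (n, y))) := by
    funext z; rcases z with x | y <;> rfl
  rw [this]

lemma equation_closed [Finite β] (φ0 : L.Formula (α ⊕ β)) (heq : IsEquation T φ0)
    {p q : Set (L.Formula (α ⊕ β))} (hpq : Pf T p q) (hp : φ0 ∈ p) (hq : φ0.not ∈ q) :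
    False := by
  classical
  obtain ⟨M, b, a, hind, hip, hiq⟩ := hpq
  have hpreal : ∀ i : ℕ, 0 < i → φ0.Realize (Sum.elim (a i) b) := by
    intro i hi
    have h2 := hip i hi
    rw [← h2] at hp
    exact hp
  have hqreal : ¬ φ0.Realize (Sum.elim (a 0) b) := by
    rw [← hiq] at hq
    exact Formula.realize_not.1 hq
  set f : (ℕ × ℕ) ⊕ ℕ → L.Formula (Gam3 α β) := fun ix =>
    match ix with
    | .inl (n, dj) => mk3 (n + dj + 1) n φ0
    | .inr n => mk3 n n φ0.not
    with hf
  have hfin : ∀ s : Finset (L.Formula (Gam3 α β)), ↑s ⊆ Set.range f →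
      ∃ (M' : Theory.ModelType.{u, v, max u v} T) (vv : Gam3 α β → M'),
        ∀ χ ∈ s, χ.Realize vv := by
    intro s hs
    choose ixf hixf using fun χ : {χ // χ ∈ s} => hs (Finset.mem_coe.2 χ.2)
    set sz : (ℕ × ℕ) ⊕ ℕ → ℕ := fun ix =>
      match ix with
      | .inl (n, dj) => n + dj + 1
      | .inr n => n
      with hsz
    set J : ℕ := (s.attach.sup fun χ => sz (ixf χ)) + 1 with hJ
    -- the existential formula over a window of length J+1
    set rr : Fin (J+1) → (α ⊕ β) → ((Fin (J+1) × α) ⊕ β) :=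
      fun t => Sum.map (fun x => (t, x)) id with hrr
    set body : L.Formula ((Fin (J+1) × α) ⊕ β) :=
      BoundedFormula.iInf (fun t : Fin (J+1) =>
        if t = 0 then (φ0.relabel (rr 0)).not else φ0.relabel (rr t)) with hbody
    set χJ : L.Formula (Fin (J+1) × α) := Formula.iExs β body with hχJ
    have hcomp : ∀ (t : Fin (J+1)) (u : Fin (J+1) × α → M) (w : β → M),
        ((fun z => Sum.elim u w (id z)) ∘ (rr t)) = Sum.elim (fun x => u (t, x)) w := by
      intro t u w
      funext z; rcases z with x | y <;> rfl
    have hreal : ∀ u : Fin (J+1) × α → M, χJ.Realize u ↔ ∃ w : β → M,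
        (¬ φ0.Realize (Sum.elim (fun x => u (0, x)) w)) ∧
          ∀ t : Fin (J+1), t ≠ 0 → φ0.Realize (Sum.elim (fun x => u (t, x)) w) := by
      intro u
      rw [hχJ, Formula.realize_iExs]
      constructor
      · rintro ⟨w, hw⟩
        refine ⟨w, ?_, ?_⟩
        · have h0 : ((φ0.relabel (rr 0)).not).Realize (fun z => Sum.elim u w (id z)) := by
            have h1 := BoundedFormula.realize_iInf.1 hw 0
            rwa [if_pos rfl] at h1
          rw [Formula.realize_not, Formula.realize_relabel, hcomp] at h0
          exact h0
        · intro t ht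
          have h0 : (φ0.relabel (rr t)).Realize (fun z => Sum.elim u w (id z)) := by
            have h1 := BoundedFormula.realize_iInf.1 hw t
            rwa [if_neg ht] at h1
          rw [Formula.realize_relabel, hcomp] at h0
          exact h0
      · rintro ⟨w, h0, ht⟩
        refine ⟨w, ?_⟩
        refine BoundedFormula.realize_iInf.2 (fun t => ?_)
        by_cases h : t = 0
        · rw [if_pos h]
          show ((φ0.relabel (rr 0)).not).Realize (fun z => Sum.elim u w (id z))
          rw [Formula.realize_not, Formula.realize_relabel, hcomp]
          exact h0
        · rw [if_neg h]
          show (φ0.relabel (rr t)).Realize (fun z => Sum.elim u w (id z))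
          rw [Formula.realize_relabel, hcomp]
          exact ht t h
    -- the base instance of the existential
    have hbase : χJ.Realize (fun p => a (p.1 : ℕ) p.2) := by
      rw [hreal]
      refine ⟨b, ?_, ?_⟩
      · simpa using hqreal
      · intro t ht
        have h0 : (t : ℕ) ≠ 0 := fun hcon => ht (by ext; simp [hcon])
        exact hpreal (t : ℕ) (by omega)
    -- shifted instances, by indiscernibility
    have hshift : ∀ n : ℕ, χJ.Realize (fun p => a (n + 1 + (p.1 : ℕ)) p.2) := by
      intro n
      have hmono1 : StrictMono (fun t : Fin (J+1) => n + 1 + (t : ℕ)) := by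
        intro x y hxy
        have h1 : (x : ℕ) < y := hxy
        show n + 1 + (x : ℕ) < n + 1 + (y : ℕ)
        omega
      have hmono2 : StrictMono (fun t : Fin (J+1) => (t : ℕ)) := fun x y hxy => hxy
      have := hind (J+1) (fun t => n + 1 + (t : ℕ)) (fun t => (t : ℕ)) hmono1 hmono2 χJ
      exact this.2 hbase
    have hYex : ∀ n : ℕ, ∃ w : β → M,
        (¬ φ0.Realize (Sum.elim (a (n+1)) w)) ∧
          ∀ t : Fin (J+1), t ≠ 0 → φ0.Realize (Sum.elim (a (n + 1 + (t : ℕ))) w) := by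
      intro n
      have := (hreal _).1 (hshift n)
      obtain ⟨w, h0, ht⟩ := this
      refine ⟨w, ?_, fun t htt => ht t htt⟩
      simpa using h0
    choose Y hY0 hY1 using hYex
    set vv : Gam3 α β → M := fun z => match z with
      | .inl (j, x) => a (j+1) x
      | .inr (n, y) => Y n y with hvvdef
    refine ⟨M, vv, fun χ hχ => ?_⟩
    have hfix := hixf ⟨χ, hχ⟩
    have hbd : sz (ixf ⟨χ, hχ⟩) ≤ J - 1 := by
      have h1 := Finset.le_sup (f := fun χ => sz (ixf χ)) (Finset.mem_attach s ⟨χ, hχ⟩)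
      omega
    rcases hix : ixf ⟨χ, hχ⟩ with ⟨n, dj⟩ | n
    · rw [hix] at hfix hbd
      have hfix2 : (mk3 (n + dj + 1) n φ0).Realize vv → χ.Realize vv := by
        intro hr
        have he : f (Sum.inl (n, dj)) = χ := hfix
        rw [← he]
        exact hr
      apply hfix2
      rw [realize_mk3]
      have hdj : dj + 1 < J + 1 := by
        have hbd' : n + dj + 1 ≤ J - 1 := hbd
        omega
      have := hY1 n ⟨dj + 1, hdj⟩ (by
        intro hcon
        have : ((⟨dj + 1, hdj⟩ : Fin (J+1)) : ℕ) = 0 := by rw [hcon]; rfl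
        simp at this)
      have harith : n + 1 + ((⟨dj + 1, hdj⟩ : Fin (J+1)) : ℕ) = n + dj + 1 + 1 := by
        show n + 1 + (dj + 1) = n + dj + 1 + 1
        omega
      rw [harith] at this
      exact this
    · rw [hix] at hfix hbd
      have hfix2 : (mk3 n n φ0.not).Realize vv → χ.Realize vv := by
        intro hr
        have he : f (Sum.inr n) = χ := hfix
        rw [← he]
        exact hr
      apply hfix2
      rw [realize_mk3]
      rw [Formula.realize_not]
      exact hY0 n
  obtain ⟨N', vv, hall⟩ := compactness_con T (Set.range f) hfin
  set a' : ℕ → α → N' := fun j x => vv (.inl (j, x)) with ha'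
  set b' : ℕ → β → N' := fun n y => vv (.inr (n, y)) with hb'
  have hP : ∀ n j : ℕ, n < j → φ0.Realize (Sum.elim (a' j) (b' n)) := by
    intro n j hnj
    have this : (mk3 (n + (j - n - 1) + 1) n φ0).Realize vv :=
      hall (f (.inl (n, j - n - 1))) ⟨.inl (n, j - n - 1), rfl⟩
    rw [realize_mk3] at this
    have harith : n + (j - n - 1) + 1 = j := by omega
    rw [harith] at this
    exact this
  have hQ : ∀ n : ℕ, ¬ φ0.Realize (Sum.elim (a' n) (b' n)) := by
    intro n
    have this : (mk3 n n φ0.not).Realize vv := hall (f (.inr n)) ⟨.inr n, rfl⟩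
    rw [realize_mk3, Formula.realize_not] at this
    exact this
  set BB : ℕ → Finset (β → N') := fun n => (Finset.range n).image b' with hBB
  have hanti : Antitone fun n => ⋂ bb ∈ BB n, instSet φ0 bb := by
    intro n m hnm
    refine Set.iInter₂_mono' (fun bb hbb => ⟨bb, ?_, subset_rfl⟩)
    exact Finset.image_subset_image (Finset.range_subset_range.2 hnm) hbb
  obtain ⟨N0, hstab⟩ := heq N' BB hanti
  have h1 := hstab (N0 + 1) (by omega)
  have h2 : a' N0 ∈ ⋂ bb ∈ BB N0, instSet φ0 bb := by
    refine Set.mem_iInter₂.2 (fun bb hbb => ?_)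
    obtain ⟨jj, hjj, rfl⟩ := Finset.mem_image.1 hbb
    exact hP jj N0 (Finset.mem_range.1 hjj)
  rw [← h1] at h2
  have h3 := Set.mem_iInter₂.1 h2 (b' N0)
    (Finset.mem_image_of_mem b' (Finset.mem_range.2 (by omega)))
  exact hQ N0 h3

end Part3

section Part4

variable (T : L.Theory)

lemma boolcomb_mem_iff {α β : Type (max u v)} [Finite β]
    {p q : Set (L.Formula (α ⊕ β))} (hpq : Pf T p q) (hqp : Pf T q p)
    {χ : L.Formula (α ⊕ β)} (hχ : IsBoolCombOfEquations T χ) : χ ∈ p ↔ χ ∈ q := by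
  obtain ⟨M, b, a, hind, hip, hiq⟩ := id hpq
  have hpu : p = typeOf (Sum.elim (a 1) b) := (hip 1 one_pos).symm
  have hqw : q = typeOf (Sum.elim (a 0) b) := hiq.symm
  have hmem_p : ∀ χ : L.Formula (α ⊕ β), χ ∈ p ↔ χ.Realize (Sum.elim (a 1) b) := by
    intro χ; rw [hpu]; exact Iff.rfl
  have hmem_q : ∀ χ : L.Formula (α ⊕ β), χ ∈ q ↔ χ.Realize (Sum.elim (a 0) b) := by
    intro χ; rw [hqw]; exact Iff.rfl
  induction hχ with
  | of_equation φ' heq' =>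
    constructor
    · intro hin
      by_contra hnq
      have hqnot : φ'.not ∈ q := (hmem_q _).2 (Formula.realize_not.2 ((hmem_q _).not.1 hnq))
      exact absurd (equation_closed T φ' heq' hpq hin hqnot) not_false
    · intro hin
      by_contra hnp
      have hpnot : φ'.not ∈ p := (hmem_p _).2 (Formula.realize_not.2 ((hmem_p _).not.1 hnp))
      exact absurd (equation_closed T φ' heq' hqp hin hpnot) not_false
  | not φ' h' IH =>
    rw [hmem_p, hmem_q, Formula.realize_not, Formula.realize_not]
    rw [hmem_p, hmem_q] at IH
    exact not_congr IH
  | inf φ' ψ' h1 h2 IH1 IH2 =>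
    rw [hmem_p, hmem_q, Formula.realize_inf, Formula.realize_inf]
    rw [hmem_p φ', hmem_q φ'] at IH1
    rw [hmem_p ψ', hmem_q ψ'] at IH2
    exact and_congr IH1 IH2
  | sup φ' ψ' h1 h2 IH1 IH2 =>
    rw [hmem_p, hmem_q, Formula.realize_sup, Formula.realize_sup]
    rw [hmem_p φ', hmem_q φ'] at IH1
    rw [hmem_p ψ', hmem_q ψ'] at IH2
    exact or_congr IH1 IH2

section Transfer

variable {α β : Type (max u v)} {α2 β2 : Type (max u v)} (en : α ≃ α2) (em : β ≃ β2)

def TrSet (p : Set (L.Formula (α ⊕ β))) : Set (L.Formula (α2 ⊕ β2)) :=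
  {χ | χ.relabel (Sum.map en.symm em.symm) ∈ p}

lemma elim_comp_map_fun {α' : Type u_1} {β' : Type u_2} {α'' : Type u_3} {β'' : Type u_4}
    {M : Type w} (f : α'' → α') (g : β'' → β') (u : α' → M) (w : β' → M) :
    (Sum.elim u w) ∘ (Sum.map f g) = Sum.elim (u ∘ f) (w ∘ g) := by
  funext z; rcases z with x | y <;> rfl

lemma realize_transfer {M : Type w} [L.Structure M] (u : α → M) (w : β → M)
    (χ : L.Formula (α2 ⊕ β2)) :
    (χ.relabel (Sum.map en.symm em.symm)).Realize (Sum.elim u w) ↔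
      χ.Realize (Sum.elim (u ∘ en.symm) (w ∘ em.symm)) := by
  rw [Formula.realize_relabel, elim_comp_map_fun]

lemma typeOf_transfer {M : Type w} [L.Structure M] (u : α → M) (w : β → M) :
    typeOf (L := L) (Sum.elim (u ∘ en.symm) (w ∘ em.symm)) =
      TrSet en em (typeOf (Sum.elim u w)) :=
  Set.ext fun χ => (realize_transfer en em u w χ).symm

lemma Pf_transfer {p q : Set (L.Formula (α ⊕ β))} (h : Pf T p q) :
    Pf T (TrSet en em p) (TrSet en em q) := by
  obtain ⟨M, b, a, hind, hip, hiq⟩ := h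
  refine ⟨M, b ∘ em.symm, fun i => a i ∘ en.symm, ?_, ?_, ?_⟩
  · intro k i j hi hj ψ
    have h2 := hind k i j hi hj (ψ.relabel (Prod.map id en.symm))
    rw [Formula.realize_relabel, Formula.realize_relabel] at h2
    exact h2
  · intro i hi
    rw [typeOf_transfer, hip i hi]
  · rw [typeOf_transfer, hiq]

lemma TrSet_inj {p q : Set (L.Formula (α ⊕ β))}
    (hp : IsRealizedType T p) (hq : IsRealizedType T q)
    (h : TrSet en em p = TrSet en em q) : p = q := by
  obtain ⟨Mp, up, hup⟩ := hp
  obtain ⟨Mq, uq, huq⟩ := hq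
  have key : ∀ (M0 : Theory.ModelType.{u, v, max u v} T) (z : (α ⊕ β) → M0)
      (r : Set (L.Formula (α ⊕ β))), typeOf z = r →
      ∀ ψ : L.Formula (α ⊕ β), ψ ∈ r ↔ (ψ.relabel (Sum.map en em)) ∈ TrSet en em r := by
    intro M0 z r hr ψ
    rw [← hr]
    show ψ.Realize z ↔ ((ψ.relabel (Sum.map en em)).relabel (Sum.map en.symm em.symm)).Realize z
    rw [Formula.realize_relabel, Formula.realize_relabel]
    have : (z ∘ (Sum.map (en.symm : α2 → α) (em.symm : β2 → β))) ∘ (Sum.map en em) = z := by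
      funext zz; rcases zz with x | y <;> simp
    rw [this]
  ext ψ
  rw [key Mp up p hup ψ, key Mq uq q huq ψ, h]

lemma IsRealizedType_transfer {p : Set (L.Formula (α ⊕ β))} (hp : IsRealizedType T p) :
    IsRealizedType T (TrSet en em p) := by
  obtain ⟨M0, z, hz⟩ := hp
  refine ⟨M0, Sum.elim ((z ∘ Sum.inl) ∘ en.symm) ((z ∘ Sum.inr) ∘ em.symm), ?_⟩
  rw [typeOf_transfer]
  have hz2 : Sum.elim (z ∘ Sum.inl) (z ∘ Sum.inr) = z := by
    funext zz; rcases zz with x | y <;> rfl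
  rw [hz2, hz]

end Transfer


lemma IsEquation_relabel {α β α' β' : Type*} (ea : α ≃ α') (eb : β ≃ β')
    {φ : L.Formula (α ⊕ β)} (h : IsEquation T φ) :
    IsEquation T (φ.relabel (Sum.map ea eb)) := by
  intro M B hanti
  classical
  set B0 : ℕ → Finset (β → M) := fun n => (B n).image (fun b => b ∘ eb) with hB0
  have hset : ∀ n, (⋂ b ∈ B n, instSet (φ.relabel (Sum.map (ea : α → α') (eb : β → β'))) b) =
      (fun a : α' → M => a ∘ ea) ⁻¹' (⋂ b0 ∈ B0 n, instSet φ b0) := by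
    intro n
    ext a
    rw [Set.mem_preimage]
    constructor
    · intro ha
      refine Set.mem_iInter₂.2 (fun b0 hb0 => ?_)
      obtain ⟨b, hb, rfl⟩ := Finset.mem_image.1 hb0
      have h2 : (φ.relabel (Sum.map (ea : α → α') (eb : β → β'))).Realize (Sum.elim a b) :=
        Set.mem_iInter₂.1 ha b hb
      rw [Formula.realize_relabel, elim_comp_map_fun] at h2
      exact h2
    · intro ha
      refine Set.mem_iInter₂.2 (fun b hb => ?_)
      have h2 : φ.Realize (Sum.elim (a ∘ ea) (b ∘ eb)) :=
        Set.mem_iInter₂.1 ha (b ∘ eb) (Finset.mem_image_of_mem _ hb)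
      show (φ.relabel (Sum.map (ea : α → α') (eb : β → β'))).Realize (Sum.elim a b)
      rw [Formula.realize_relabel, elim_comp_map_fun]
      exact h2
  have hanti0 : Antitone fun n => ⋂ b0 ∈ B0 n, instSet φ b0 := by
    intro n' m' hnm x hx
    have h3 := hanti hnm
    beta_reduce at h3 hx ⊢
    rw [hset, hset] at h3
    have hy : (x ∘ ea.symm) ∘ (ea : α → α') = x := by funext t; simp
    have h4 : (x ∘ (ea.symm : α' → α)) ∈
        (fun a : α' → M => a ∘ ea) ⁻¹' (⋂ b0 ∈ B0 m', instSet φ b0) := by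
      rw [Set.mem_preimage, hy]
      exact hx
    have h5 := h3 h4
    rw [Set.mem_preimage, hy] at h5
    exact h5
  obtain ⟨N0, hN0⟩ := h M B0 hanti0
  refine ⟨N0, fun n hn => ?_⟩
  rw [hset, hset, hN0 n hn]

lemma boolcomb_relabel {α β α' β' : Type*} (ea : α ≃ α') (eb : β ≃ β')
    {χ : L.Formula (α ⊕ β)} (h : IsBoolCombOfEquations T χ) :
    IsBoolCombOfEquations T (χ.relabel (Sum.map (ea : α → α') (eb : β → β'))) := by
  induction h with
  | of_equation φ' h' => exact .of_equation _ (IsEquation_relabel T ea eb h')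
  | not φ' h' IH => exact .not _ IH
  | inf φ' ψ' h1 h2 IH1 IH2 => exact .inf _ _ IH1 IH2
  | sup φ' ψ' h1 h2 IH1 IH2 => exact .sup _ _ IH1 IH2

theorem not_equational_of_pf_cycle {α β : Type (max u v)} [Finite α] [Finite β]
    {p q : Set (L.Formula (α ⊕ β))}
    (hrp : IsRealizedType T p) (hrq : IsRealizedType T q) (hne : p ≠ q)
    (hpq : Pf T p q) (hqp : Pf T q p) : ¬ IsEquational T := by
  intro hEq
  obtain ⟨n, ⟨en0⟩⟩ := Finite.exists_equiv_fin α
  obtain ⟨m, ⟨em0⟩⟩ := Finite.exists_equiv_fin β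
  set en : α ≃ ULift.{max u v} (Fin n) := en0.trans Equiv.ulift.symm with hen
  set em : β ≃ ULift.{max u v} (Fin m) := em0.trans Equiv.ulift.symm with hem
  set gup : (Fin n ⊕ Fin m) → (ULift.{max u v} (Fin n) ⊕ ULift.{max u v} (Fin m)) :=
    Sum.map (⇑(Equiv.ulift.symm)) (⇑(Equiv.ulift.symm)) with hgup
  have hpq2 : Pf T (TrSet en em p) (TrSet en em q) := Pf_transfer T en em hpq
  have hqp2 : Pf T (TrSet en em q) (TrSet en em p) := Pf_transfer T en em hqp
  have hne2 : TrSet en em p ≠ TrSet en em q :=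
    fun hh => hne (TrSet_inj T en em hrp hrq hh)
  have hex : ∃ ψ2 : L.Formula (ULift.{max u v} (Fin n) ⊕ ULift.{max u v} (Fin m)),
      (ψ2 ∈ TrSet en em p ∧ ψ2 ∉ TrSet en em q) ∨
      (ψ2 ∈ TrSet en em q ∧ ψ2 ∉ TrSet en em p) := by
    by_contra hcon
    push_neg at hcon
    apply hne2
    ext χ
    exact ⟨(hcon χ).1, (hcon χ).2⟩
  obtain ⟨ψ2, hcase⟩ := hex
  set ψ1 : L.Formula (Fin n ⊕ Fin m) :=
    ψ2.relabel (Sum.map (⇑(Equiv.ulift.{max u v, 0})) (⇑(Equiv.ulift.{max u v, 0}))) with hψ1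
  obtain ⟨χ1, hbc, hiff⟩ := hEq n m ψ1
  set χ2 := χ1.relabel gup with hχ2
  have hbc2 : IsBoolCombOfEquations T χ2 :=
    boolcomb_relabel T Equiv.ulift.symm Equiv.ulift.symm hbc
  obtain ⟨M1, b1, a1, _, hip1, hiq1⟩ := id hpq2
  have hup : TrSet en em p = typeOf (Sum.elim (a1 1) b1) := (hip1 1 one_pos).symm
  have huq : TrSet en em q = typeOf (Sum.elim (a1 0) b1) := hiq1.symm
  have hiffr : ∀ z : (ULift.{max u v} (Fin n) ⊕ ULift.{max u v} (Fin m)) → M1,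
      ψ2.Realize z ↔ χ2.Realize z := by
    intro z
    have h3 := hiff M1 (z ∘ gup) default
    rw [BoundedFormula.realize_iff] at h3
    have e0 : ((z ∘ gup) ∘ (Sum.map (⇑(Equiv.ulift.{max u v, 0}))
        (⇑(Equiv.ulift.{max u v, 0})))) = z := by
      funext zz
      rcases zz with x | y <;> rfl
    have e1 : ψ2.Realize z ↔ ψ1.Realize (z ∘ gup) := by
      rw [hψ1, Formula.realize_relabel, e0]
    have e2 : χ2.Realize z ↔ χ1.Realize (z ∘ gup) := by
      rw [hχ2, Formula.realize_relabel]
    rw [e1, e2]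
    exact h3
  have hmemp : ψ2 ∈ TrSet en em p ↔ χ2 ∈ TrSet en em p := by
    rw [hup]; exact hiffr _
  have hmemq : ψ2 ∈ TrSet en em q ↔ χ2 ∈ TrSet en em q := by
    rw [huq]; exact hiffr _
  have hbciff : χ2 ∈ TrSet en em p ↔ χ2 ∈ TrSet en em q :=
    boolcomb_mem_iff T hpq2 hqp2 hbc2
  rcases hcase with ⟨h1, h2⟩ | ⟨h1, h2⟩
  · exact h2 (hmemq.2 (hbciff.1 (hmemp.1 h1)))
  · exact h2 (hmemp.2 (hbciff.2 (hmemq.1 h1)))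

end Part4

/-- If a complete theory `T` satisfies the MS-criterion, witnessed by a formula
`φ(x; y)` and a matrix `(a_{ij}, b_{ij})_{i,j ∈ ℕ}` with `⊨ φ(a_{ij}, b_{il}) ↔ j = l` and
`(a_{ij}, b_{ij}) ≡ (a_{ij}, b_{kl})` for `i < k`, `j < l`, then there are distinct complete
types `p ≠ q` over `∅` with `p ⟶ q` and `q ⟶ p`; in particular `T` is not equational. -/
theorem ms_criterion_not_equational {α β : Type (max u v)} [Finite α] [Finite β]
    (hT : T.IsComplete) (φ : L.Formula (α ⊕ β))
    (h : ∃ (M : Theory.ModelType.{u, v, max u v} T)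
        (a : ℕ → ℕ → α → M) (b : ℕ → ℕ → β → M),
      (∀ i j l : ℕ, φ.Realize (Sum.elim (a i j) (b i l)) ↔ j = l) ∧
        ∀ i j k l : ℕ, i < k → j < l →
          typeOf (L := L) (Sum.elim (a i j) (b i j)) = typeOf (Sum.elim (a i j) (b k l))) :
    (∃ p q : Set (L.Formula (α ⊕ β)),
      IsRealizedType T p ∧ IsRealizedType T q ∧ p ≠ q ∧ Pf T p q ∧ Pf T q p) ∧
      ¬ IsEquational T := by
  obtain ⟨p, q, hrp, hrq, hne, hpq, hqp⟩ := part2_main T φ h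
  exact ⟨⟨p, q, hrp, hrq, hne, hpq, hqp⟩, not_equational_of_pf_cycle T hrp hrq hne hpq hqp⟩

end Equationality
end

section
/- The kernel of an indiscernible sequence (a_i)_{i∈I} is the largest subset of acl^eq((a_i)_{i∈I}) over which the sequence is indiscernible. -/
open FirstOrder FirstOrder.Language Set

universe u v w

namespace Equationality

variable {L : FirstOrder.Language.{u, v}}

variable (T : L.Theory)

section Imag

variable {M : Type w} [L.Structure M]

/-- `E` defines an equivalence relation on `n`-tuples of `M`. -/
def IsEqRelFormula (n : ℕ) (E : L.Formula (Fin n ⊕ Fin n)) (M : Type w) [L.Structure M] :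
    Prop :=
  (∀ a : Fin n → M, E.Realize (Sum.elim a a)) ∧
  (∀ a b : Fin n → M, E.Realize (Sum.elim a b) → E.Realize (Sum.elim b a)) ∧
  (∀ a b c : Fin n → M, E.Realize (Sum.elim a b) → E.Realize (Sum.elim b c) →
    E.Realize (Sum.elim a c))

/-- An imaginary element of `M` (an element of `M^eq`): a class of a `∅`-definable
equivalence relation on finite tuples. -/
structure Im (L : FirstOrder.Language.{u, v}) (M : Type w) [L.Structure M] where
  n : ℕ
  E : L.Formula (Fin n ⊕ Fin n)
  isEqRel : IsEqRelFormula n E M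
  cls : Set (Fin n → M)
  isCls : ∃ a : Fin n → M, cls = {b | E.Realize (Sum.elim a b)}

/-- The variable sort corresponding to a finite tuple `e` of imaginaries. -/
abbrev ImVars {k : ℕ} (e : Fin k → Im L M) : Type _ := Σ r : Fin k, Fin ((e r).n)

/-- A choice of representatives for a tuple of imaginaries. -/
def IsRep {k : ℕ} (e : Fin k → Im L M) (c : ∀ r : Fin k, Fin ((e r).n) → M) : Prop :=
  ∀ r, c r ∈ (e r).cls

/-- A formula with an imaginary-parameter block is invariant if its truth value does not
depend on the choice of representatives. -/
def ImInvariant {γ : Type*} {k : ℕ} (e : Fin k → Im L M)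
    (φ : L.Formula (γ ⊕ ImVars e)) : Prop :=
  ∀ (d : γ → M) (c c' : ∀ r, Fin ((e r).n) → M), IsRep e c → IsRep e c' →
    (φ.Realize (Sum.elim d fun q => c q.1 q.2) ↔ φ.Realize (Sum.elim d fun q => c' q.1 q.2))

/-- The complete type of a real tuple `d` over a tuple of imaginaries `e` : the set of
invariant formulas over `e` satisfied by `d`. -/
def typeOverIm {γ : Type*} {k : ℕ} (e : Fin k → Im L M) (d : γ → M) :
    Set (L.Formula (γ ⊕ ImVars e)) :=
  {φ | ImInvariant (L := L) e φ ∧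
    ∀ c : ∀ r, Fin ((e r).n) → M, IsRep e c → φ.Realize (Sum.elim d fun q => c q.1 q.2)}

/-- The imaginary `e` lies in `acl^eq(X)`, for a set `X` of real elements: some `X`-definable
`E`-invariant formula holds of `e` and of only finitely many `E`-classes. -/
def InAclEq (X : Set M) (e : Im L M) : Prop :=
  ∃ (m : ℕ) (c : Fin m → M) (φ : L.Formula (Fin e.n ⊕ Fin m)),
    (∀ t, c t ∈ X) ∧
    (∀ a b : Fin e.n → M, e.E.Realize (Sum.elim a b) →
      (φ.Realize (Sum.elim a c) ↔ φ.Realize (Sum.elim b c))) ∧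
    (∀ a ∈ e.cls, φ.Realize (Sum.elim a c)) ∧
    {D : Set (Fin e.n → M) | (∃ a : Fin e.n → M, D = {b | e.E.Realize (Sum.elim a b)}) ∧
      ∀ a ∈ D, φ.Realize (Sum.elim a c)}.Finite

/-- Indiscernibility of a sequence over an imaginary tuple `e`. -/
def IsIndiscernibleOverIm {k : ℕ} (e : Fin k → Im L M) {I : Type*} [LinearOrder I]
    {γ : Type*} (a : I → γ → M) : Prop :=
  ∀ (n : ℕ) (i j : Fin n → I), StrictMono i → StrictMono j →
    ∀ φ : L.Formula ((Fin n × γ) ⊕ ImVars e), ImInvariant (L := L) e φ →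
      ∀ c : ∀ r, Fin ((e r).n) → M, IsRep e c →
        (φ.Realize (Sum.elim (fun p => a (i p.1) p.2) fun q => c q.1 q.2) ↔
          φ.Realize (Sum.elim (fun p => a (j p.1) p.2) fun q => c q.1 q.2))

/-- The formula `φ(x, d)` divides over the imaginary tuple `e`. -/
def DividesIm {α γ : Type*} {k : ℕ} (φ : L.Formula (α ⊕ γ)) (d : γ → M)
    (e : Fin k → Im L M) : Prop :=
  ∃ (kk : ℕ) (d' : ℕ → γ → M), 0 < kk ∧ d' 0 = d ∧
    IsIndiscernibleOverIm (L := L) e d' ∧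
    ∀ s : Finset ℕ, s.card = kk → ¬ ∃ a : α → M, ∀ i ∈ s, φ.Realize (Sum.elim a (d' i))

/-- `a` is forking-independent from `B` over the imaginary tuple `e`. -/
def IndepOverIm {α : Type*} {k : ℕ} (a : α → M) (B : Set M) (e : Fin k → Im L M) : Prop :=
  ∀ (m : ℕ) (c : Fin m → M), (∀ t, c t ∈ B) →
    ∀ φ : L.Formula (α ⊕ (Fin m ⊕ ImVars e)),
      (∀ (x : α → M) (c0 : Fin m → M) (r1 r2 : ∀ r, Fin ((e r).n) → M),
        IsRep e r1 → IsRep e r2 →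
        (φ.Realize (Sum.elim x (Sum.elim c0 fun q => r1 q.1 q.2)) ↔
          φ.Realize (Sum.elim x (Sum.elim c0 fun q => r2 q.1 q.2)))) →
      ∀ rep : ∀ r, Fin ((e r).n) → M, IsRep e rep →
        φ.Realize (Sum.elim a (Sum.elim c fun q => rep q.1 q.2)) →
        ¬ DividesIm (L := L) φ (Sum.elim c fun q => rep q.1 q.2) e

/-- `d` and `d'` have the same type over `B ∪ e`. -/
def SameTypeOverIm {γ : Type*} {k : ℕ} (d d' : γ → M) (B : Set M)
    (e : Fin k → Im L M) : Prop :=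
  ∀ (m : ℕ) (c : Fin m → M), (∀ t, c t ∈ B) →
    ∀ φ : L.Formula (γ ⊕ (Fin m ⊕ ImVars e)),
      (∀ (x : γ → M) (c0 : Fin m → M) (r1 r2 : ∀ r, Fin ((e r).n) → M),
        IsRep e r1 → IsRep e r2 →
        (φ.Realize (Sum.elim x (Sum.elim c0 fun q => r1 q.1 q.2)) ↔
          φ.Realize (Sum.elim x (Sum.elim c0 fun q => r2 q.1 q.2)))) →
      ∀ rep : ∀ r, Fin ((e r).n) → M, IsRep e rep →
        (φ.Realize (Sum.elim d (Sum.elim c fun q => rep q.1 q.2)) ↔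
          φ.Realize (Sum.elim d' (Sum.elim c fun q => rep q.1 q.2)))

/-- A type over the imaginary tuple `e` is stationary: realizations independent from a set `B`
over `e` all have the same type over `B ∪ e`. -/
def IsStationaryOverIm {γ : Type*} {k : ℕ} (e : Fin k → Im L M)
    (p : Set (L.Formula (γ ⊕ ImVars e))) : Prop :=
  ∀ d d' : γ → M, typeOverIm (L := L) e d = p → typeOverIm (L := L) e d' = p →
    ∀ B : Set M, IndepOverIm (L := L) d B e → IndepOverIm (L := L) d' B e →
      SameTypeOverIm (L := L) d d' B e

/-- `p ⟶ q` for types over the imaginary tuple `e`, with variable partition `(α; β)`. -/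
def PfOverIm {α β : Type*} {k : ℕ} (e : Fin k → Im L M)
    (p q : Set (L.Formula ((α ⊕ β) ⊕ ImVars e))) : Prop :=
  ∃ (b : β → M) (a : ℕ → α → M), IsIndiscernible (L := L) a ∧
    (∀ i : ℕ, 0 < i → typeOverIm (L := L) e (Sum.elim (a i) b) = p) ∧
    typeOverIm (L := L) e (Sum.elim (a 0) b) = q

end Imag
section ImSet

variable {M : Type w} [L.Structure M]

/-- Indiscernibility of a sequence over a set `K` of imaginaries. -/
def IsIndiscernibleOverImSet (K : Set (Im L M)) {I : Type*} [LinearOrder I] {γ : Type*}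
    (a : I → γ → M) : Prop :=
  ∀ (k : ℕ) (e : Fin k → Im L M), (∀ r, e r ∈ K) → IsIndiscernibleOverIm (L := L) e a

/-- The kernel of an indiscernible sequence: the union over all cuts `I₀ ≪ I₁` of
`acl^eq(a_{I₀}) ∩ acl^eq(a_{I₁})`. -/
def kernel {I : Type*} [LinearOrder I] {γ : Type*} (a : I → γ → M) : Set (Im L M) :=
  {x : Im L M | ∃ I₀ I₁ : Set I, (∀ i ∈ I₀, ∀ j ∈ I₁, i < j) ∧
    InAclEq (L := L) (⋃ i ∈ I₀, range (a i)) x ∧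
    InAclEq (L := L) (⋃ i ∈ I₁, range (a i)) x}

end ImSet
section Toolkit

variable {M : Type w} [L.Structure M]

namespace Im

variable (x : Im L M)

lemma exists_base : ∃ b, x.cls = {y | x.E.Realize (Sum.elim b y)} := x.isCls

lemma cls_nonempty : x.cls.Nonempty := by
  obtain ⟨b, hb⟩ := x.isCls
  exact ⟨b, by rw [hb]; exact x.isEqRel.1 b⟩

lemma rel_of_mem {u u' : Fin x.n → M} (hu : u ∈ x.cls) (hu' : u' ∈ x.cls) :
    x.E.Realize (Sum.elim u u') := by
  obtain ⟨b, hb⟩ := x.isCls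
  rw [hb] at hu hu'
  exact x.isEqRel.2.2 u b u' (x.isEqRel.2.1 b u hu) hu'

lemma mem_of_rel {u y : Fin x.n → M} (hu : u ∈ x.cls) (h : x.E.Realize (Sum.elim u y)) :
    y ∈ x.cls := by
  obtain ⟨b, hb⟩ := x.isCls
  rw [hb] at hu ⊢
  exact x.isEqRel.2.2 b u y hu h

lemma cls_eq_class_of_mem {u : Fin x.n → M} (hu : u ∈ x.cls) :
    x.cls = {y | x.E.Realize (Sum.elim u y)} := by
  ext y
  exact ⟨fun hy => x.rel_of_mem hu hy, fun hy => x.mem_of_rel hu hy⟩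

end Im

section EEq

variable {k : ℕ} (e : Fin k → Im L M)

/-- Equivalence of assignments of the imaginary variables. -/
def eEq (x y : ImVars e → M) : Prop :=
  ∀ r : Fin k, (e r).E.Realize (Sum.elim (fun m => x ⟨r, m⟩) (fun m => y ⟨r, m⟩))

lemma eEq_refl (x : ImVars e → M) : eEq e x x := fun r => (e r).isEqRel.1 _

lemma eEq_symm {x y : ImVars e → M} (h : eEq e x y) : eEq e y x :=
  fun r => (e r).isEqRel.2.1 _ _ (h r)

lemma eEq_trans {x y z : ImVars e → M} (h : eEq e x y) (h' : eEq e y z) : eEq e x z :=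
  fun r => (e r).isEqRel.2.2 _ _ _ (h r) (h' r)

/-- The setoid of assignments of the imaginary variables. -/
def eStd : Setoid (ImVars e → M) :=
  ⟨eEq e, ⟨eEq_refl e, eEq_symm e, eEq_trans e⟩⟩

/-- Uncurrying a representative tuple. -/
def repv (c : ∀ r : Fin k, Fin ((e r).n) → M) : ImVars e → M := fun q => c q.1 q.2

lemma isRep_repv_iff {c : ∀ r : Fin k, Fin ((e r).n) → M} (hc : IsRep (L := L) e c)
    {y : ImVars e → M} :
    eEq e (repv e c) y ↔ IsRep (L := L) e (fun r m => y ⟨r, m⟩) := by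
  constructor
  · intro h r
    exact (e r).mem_of_rel (hc r) (h r)
  · intro h r
    exact (e r).rel_of_mem (hc r) (h r)

end EEq

end Toolkit
section Formulas

variable {M : Type w} [L.Structure M] {k : ℕ} (e : Fin k → Im L M) {α : Type*}

/-- The formula stating that two assignments of the imaginary variables are equivalent. -/
noncomputable def eallF : L.Formula ((α ⊕ ImVars e) ⊕ ImVars e) :=
  BoundedFormula.iInf (fun r : Fin k =>
    (e r).E.relabel (Sum.elim (fun m => Sum.inl (Sum.inr ⟨r, m⟩)) (fun m => Sum.inr ⟨r, m⟩)))

lemma realize_eallF {v : α → M} {x y : ImVars e → M} :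
    (eallF e (α := α)).Realize (Sum.elim (Sum.elim v x) y) ↔ eEq e x y := by
  rw [Formula.Realize, eallF]
  rw [BoundedFormula.realize_iInf]
  refine forall_congr' fun r => ?_
  rw [show BoundedFormula.Realize ((e r).E.relabel _) (Sum.elim (Sum.elim v x) y) default
      ↔ ((e r).E.relabel (Sum.elim (fun m => Sum.inl (Sum.inr ⟨r, m⟩))
        (fun m => Sum.inr (⟨r, m⟩ : ImVars e)))).Realize (Sum.elim (Sum.elim v x) y) from Iff.rfl]
  rw [Formula.realize_relabel]
  rw [show (Sum.elim (Sum.elim v x) y) ∘ (Sum.elim (fun m => Sum.inl (Sum.inr ⟨r, m⟩))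
      (fun m => Sum.inr (⟨r, m⟩ : ImVars e)))
    = Sum.elim (fun m => x ⟨r, m⟩) (fun m => y ⟨r, m⟩) by
      funext q; cases q <;> rfl]

/-- The "guarded" version of a formula : it holds of all assignments equivalent to the
given one. -/
noncomputable def allRepsF (χ : L.Formula (α ⊕ ImVars e)) : L.Formula (α ⊕ ImVars e) :=
  Formula.iAlls _
    ((eallF e).imp (χ.relabel (Sum.elim (fun b => Sum.inl (Sum.inl b)) Sum.inr)))

/-- The guarded predicate on assignments. -/
def grd (v : α → M) (χ : L.Formula (α ⊕ ImVars e)) (z : ImVars e → M) : Prop :=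
  ∀ y, eEq e z y → χ.Realize (Sum.elim v y)

lemma realize_allRepsF {χ : L.Formula (α ⊕ ImVars e)} {v : α → M} {x : ImVars e → M} :
    (allRepsF e χ).Realize (Sum.elim v x) ↔ grd e v χ x := by
  rw [allRepsF, Formula.realize_iAlls]
  refine forall_congr' fun y => ?_
  rw [show (fun a => Sum.elim (Sum.elim v x) y a) = Sum.elim (Sum.elim v x) y by
    funext q; cases q <;> rfl]
  rw [Formula.realize_imp, realize_eallF, Formula.realize_relabel]
  rw [show (Sum.elim (Sum.elim v x) y) ∘ (Sum.elim (fun b => Sum.inl (Sum.inl b)) Sum.inr)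
    = Sum.elim v y by funext q; cases q <;> rfl]

lemma grd_congr {χ : L.Formula (α ⊕ ImVars e)} {v : α → M} {x x' : ImVars e → M}
    (h : eEq e x x') : grd e v χ x ↔ grd e v χ x' :=
  ⟨fun hg y hy => hg y (eEq_trans e h hy),
   fun hg y hy => hg y (eEq_trans e (eEq_symm e h) hy)⟩

/-- `manyF e χ s` says that there are at least `s` pairwise inequivalent assignments
satisfying the guarded version of `χ`. -/
noncomputable def manyF (χ : L.Formula (α ⊕ ImVars e)) (s : ℕ) : L.Formula α :=
  Formula.iExs _
    ((BoundedFormula.iInf (fun p : Fin s × Fin s =>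
      if p.1 = p.2 then ⊤ else
        (BoundedFormula.iInf (fun r : Fin k =>
          (e r).E.relabel (Sum.elim (fun m => Sum.inr (p.1, (⟨r, m⟩ : ImVars e)))
            (fun m => Sum.inr (p.2, (⟨r, m⟩ : ImVars e)))))).not))
    ⊓ BoundedFormula.iInf (fun b : Fin s =>
        (allRepsF e χ).relabel (Sum.elim Sum.inl (fun q => Sum.inr (b, q)))))

lemma realize_manyF {χ : L.Formula (α ⊕ ImVars e)} {s : ℕ} {v : α → M} :
    (manyF e χ s).Realize v ↔
      ∃ x : Fin s → ImVars e → M,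
        (∀ b b', b ≠ b' → ¬ eEq e (x b) (x b')) ∧ ∀ b, grd e v χ (x b) := by
  rw [manyF, Formula.realize_iExs]
  constructor
  · rintro ⟨i, hi⟩
    rw [Formula.realize_inf] at hi
    obtain ⟨h1, h2⟩ := hi
    refine ⟨fun b q => i (b, q), fun b b' hbb' hE => ?_, fun b => ?_⟩
    · rw [Formula.Realize, BoundedFormula.realize_iInf] at h1
      have := h1 (b, b')
      rw [if_neg (by simpa using hbb')] at this
      rw [BoundedFormula.realize_not, BoundedFormula.realize_iInf] at this
      refine this fun r => ?_
      have := hE r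
      rw [show BoundedFormula.Realize ((e r).E.relabel _) (Sum.elim v i) default
          ↔ ((e r).E.relabel (Sum.elim (fun m => Sum.inr ((b, ⟨r, m⟩) : Fin s × ImVars e))
            (fun m => Sum.inr ((b', ⟨r, m⟩) : Fin s × ImVars e)))).Realize (Sum.elim v i)
          from Iff.rfl, Formula.realize_relabel]
      rw [show (Sum.elim v i) ∘ (Sum.elim (fun m => Sum.inr ((b, ⟨r, m⟩) : Fin s × ImVars e))
          (fun m => Sum.inr ((b', ⟨r, m⟩) : Fin s × ImVars e)))
        = Sum.elim (fun m => i (b, ⟨r, m⟩)) (fun m => i (b', ⟨r, m⟩)) by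
          funext q; cases q <;> rfl]
      exact this
    · rw [Formula.Realize, BoundedFormula.realize_iInf] at h2
      have := h2 b
      rw [show BoundedFormula.Realize ((allRepsF e χ).relabel _) (Sum.elim v i) default
          ↔ ((allRepsF e χ).relabel (Sum.elim Sum.inl
            (fun q => Sum.inr ((b, q) : Fin s × ImVars e)))).Realize (Sum.elim v i)
          from Iff.rfl, Formula.realize_relabel] at this
      rw [show (Sum.elim v i) ∘ (Sum.elim Sum.inl
          (fun q => Sum.inr ((b, q) : Fin s × ImVars e)))
        = Sum.elim v (fun q => i (b, q)) by funext q; cases q <;> rfl] at this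
      exact (realize_allRepsF e).1 this
  · rintro ⟨x, hdist, hgrd⟩
    refine ⟨fun p => x p.1 p.2, ?_⟩
    rw [Formula.realize_inf]
    constructor
    · rw [Formula.Realize, BoundedFormula.realize_iInf]
      intro p
      by_cases hp : p.1 = p.2
      · rw [if_pos hp]; exact BoundedFormula.realize_top.2 trivial
      · rw [if_neg hp, BoundedFormula.realize_not, BoundedFormula.realize_iInf]
        intro hE
        refine hdist p.1 p.2 hp fun r => ?_
        have := hE r
        rw [show BoundedFormula.Realize ((e r).E.relabel _) _ default
            ↔ ((e r).E.relabel (Sum.elim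
              (fun m => Sum.inr ((p.1, ⟨r, m⟩) : Fin s × ImVars e))
              (fun m => Sum.inr ((p.2, ⟨r, m⟩) : Fin s × ImVars e)))).Realize
              (Sum.elim v (fun p : Fin s × ImVars e => x p.1 p.2)) from Iff.rfl,
          Formula.realize_relabel] at this
        rw [show (Sum.elim v (fun p : Fin s × ImVars e => x p.1 p.2)) ∘ (Sum.elim
            (fun m => Sum.inr ((p.1, ⟨r, m⟩) : Fin s × ImVars e))
            (fun m => Sum.inr ((p.2, ⟨r, m⟩) : Fin s × ImVars e)))
          = Sum.elim (fun m => x p.1 ⟨r, m⟩) (fun m => x p.2 ⟨r, m⟩) by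
            funext q; cases q <;> rfl] at this
        exact this
    · rw [Formula.Realize, BoundedFormula.realize_iInf]
      intro b
      rw [show BoundedFormula.Realize ((allRepsF e χ).relabel _) _ default
          ↔ ((allRepsF e χ).relabel (Sum.elim Sum.inl
            (fun q => Sum.inr ((b, q) : Fin s × ImVars e)))).Realize
            (Sum.elim v (fun p : Fin s × ImVars e => x p.1 p.2)) from Iff.rfl,
        Formula.realize_relabel]
      rw [show (Sum.elim v (fun p : Fin s × ImVars e => x p.1 p.2)) ∘ (Sum.elim Sum.inl
          (fun q => Sum.inr ((b, q) : Fin s × ImVars e)))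
        = Sum.elim v (x b) by funext q; cases q <;> rfl]
      exact (realize_allRepsF e).2 (hgrd b)

end Formulas
section Counting

variable {M : Type w} [L.Structure M] {k : ℕ} (e : Fin k → Im L M) {α : Type*}

/-- The set of classes of assignments satisfying an (equivalence-invariant) predicate. -/
def qs (P : (ImVars e → M) → Prop) : Set (Quotient (eStd e)) :=
  {q | ∃ z, Quotient.mk (eStd e) z = q ∧ P z}

lemma mem_qs_iff {P : (ImVars e → M) → Prop}
    (hP : ∀ {x y}, eEq e x y → (P x ↔ P y)) {z : ImVars e → M} :
    Quotient.mk (eStd e) z ∈ qs e P ↔ P z := by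
  constructor
  · rintro ⟨z', hz', hP'⟩
    exact (hP (Quotient.exact hz' : eEq e z' z)).1 hP'
  · intro h; exact ⟨z, rfl, h⟩

/-- Existence of `s` pairwise inequivalent assignments satisfying a predicate is
equivalent to `qs` containing a finite subset of size `s`. -/
lemma exists_tuples_iff_card {P : (ImVars e → M) → Prop} {s : ℕ} :
    (∃ x : Fin s → ImVars e → M,
        (∀ b b', b ≠ b' → ¬ eEq e (x b) (x b')) ∧ ∀ b, P (x b)) ↔
      ∃ t : Finset (Quotient (eStd e)), t.card = s ∧ ↑t ⊆ qs e P := by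
  classical
  constructor
  · rintro ⟨x, hdist, hPx⟩
    refine ⟨Finset.image (fun b => Quotient.mk (eStd e) (x b)) Finset.univ, ?_, ?_⟩
    · rw [Finset.card_image_of_injective _ ?_, Finset.card_univ, Fintype.card_fin]
      intro b b' hbb'
      by_contra hne
      exact hdist b b' hne (Quotient.exact hbb')
    · intro q hq
      simp only [Finset.coe_image, Finset.coe_univ, Set.image_univ, Set.mem_range] at hq
      obtain ⟨b, rfl⟩ := hq
      exact ⟨x b, rfl, hPx b⟩
  · rintro ⟨t, rfl, hsub⟩
    have hmem : ∀ q ∈ t, ∃ z, Quotient.mk (eStd e) z = q ∧ P z := fun q hq => hsub hq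
    choose f hf1 hf2 using hmem
    refine ⟨fun b => f (t.equivFin.symm b) (t.equivFin.symm b).2,
      fun b b' hbb' hE => hbb' ?_, fun b => hf2 _ _⟩
    apply t.equivFin.symm.injective
    apply Subtype.ext
    rw [← hf1 _ (t.equivFin.symm b).2, ← hf1 _ (t.equivFin.symm b').2]
    exact Quotient.sound hE

/-- A finite set admits a subset of any cardinality at most its own. -/
lemma exists_card_subset_iff {Q : Type*} {A : Set Q} (hA : A.Finite) {s : ℕ} :
    (∃ t : Finset Q, t.card = s ∧ ↑t ⊆ A) ↔ s ≤ hA.toFinset.card := by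
  constructor
  · rintro ⟨t, rfl, hsub⟩
    exact Finset.card_le_card (fun q hq => hA.mem_toFinset.2 (hsub hq))
  · intro hs
    obtain ⟨t, hts, hcard⟩ := Finset.exists_subset_card_eq hs
    exact ⟨t, hcard, fun q hq => hA.mem_toFinset.1 (hts hq)⟩

/-- If a predicate set does not contain `s` distinct elements then it is finite. -/
lemma finite_of_not_exists_card {Q : Type*} {A : Set Q} {s : ℕ}
    (h : ¬ ∃ t : Finset Q, t.card = s ∧ ↑t ⊆ A) : A.Finite := by
  by_contra hinf
  obtain ⟨t, hts, hcard⟩ := Set.Infinite.exists_subset_card_eq hinf s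
  exact h ⟨t, hcard, hts⟩

/-- The master pigeonhole lemma. -/
lemma pigeonhole_finsets {Q : Type*} [DecidableEq Q] {W : Finset Q}
    {A : Fin (2 ^ W.card + 1) → Finset Q}
    (hsub : ∀ t, A t ⊆ W)
    (hcard : ∀ t t', (A t).card = (A t').card)
    (hint : ∀ t t' s s', t ≠ t' → s ≠ s' → (A t ∩ A t').card = (A s ∩ A s').card) :
    ∀ t t', A t = A t' := by
  have key : ∃ t t', t ≠ t' ∧ A t = A t' := by
    have hlt : Fintype.card {x // x ∈ W.powerset} < Fintype.card (Fin (2 ^ W.card + 1)) := by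
      rw [Fintype.card_coe, Finset.card_powerset, Fintype.card_fin]
      omega
    obtain ⟨t, t', hne, heq⟩ := Fintype.exists_ne_map_eq_of_card_lt
      (fun t => (⟨A t, Finset.mem_powerset.2 (hsub t)⟩ : {x // x ∈ W.powerset})) hlt
    exact ⟨t, t', hne, congrArg Subtype.val heq⟩
  obtain ⟨t0, t1, hne, heq⟩ := key
  have hfull : ∀ s s', s ≠ s' → A s = A s' := by
    intro s s' hss'
    have h1 : (A s ∩ A s').card = (A t0).card := by
      rw [hint s s' t0 t1 hss' hne, heq, Finset.inter_self]
    have h2 : A s ∩ A s' = A s := by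
      apply Finset.eq_of_subset_of_card_le Finset.inter_subset_left
      rw [h1]; exact le_of_eq (hcard s t0)
    have h3 : A s ∩ A s' = A s' := by
      apply Finset.eq_of_subset_of_card_le Finset.inter_subset_right
      rw [h1]; exact le_of_eq (hcard s' t0)
    rw [← h2, h3]
  intro t t'
  rcases eq_or_ne t t' with rfl | h
  · rfl
  · exact hfull t t' h

end Counting
section OrderUtils

variable {I : Type*} [LinearOrder I]

lemma strictMono_sumLexElim {A B : Type*} [Preorder A] [Preorder B]
    {f : A → I} {g : B → I} (hf : StrictMono f) (hg : StrictMono g)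
    (hfg : ∀ x y, f x < g y) :
    StrictMono (fun p : A ⊕ₗ B => Sum.elim f g (ofLex p)) := by
  intro p q hpq
  rcases p with p; rcases q with q
  rw [Sum.Lex.lt_def] at hpq
  rcases hpq with h | h | h
  · exact hf (by exact h)
  · exact hg (by exact h)
  · exact hfg _ _

lemma exists_nat_chain_above [NoMaxOrder I] (z : I) :
    ∃ f : ℕ → I, StrictMono f ∧ z < f 0 := by
  have hstep : ∀ x : I, ∃ y, x < y := fun x => exists_gt x
  choose g hg using hstep
  refine ⟨fun n => g^[n + 1] z, strictMono_nat_of_lt_succ fun n => ?_, by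
    simpa using hg z⟩
  have h := hg (g^[n + 1] z)
  rwa [show g (g^[n+1] z) = g^[n+1+1] z from (Function.iterate_succ_apply' g (n+1) z).symm] at h

lemma exists_strictMono_above [NoMaxOrder I] (J : Type*) [Fintype J] [LinearOrder J]
    (z : I) : ∃ w : J → I, StrictMono w ∧ ∀ j, z < w j := by
  obtain ⟨f, hf, hz⟩ := exists_nat_chain_above z
  refine ⟨fun j => f ((Fintype.orderIsoFinOfCardEq J rfl).symm j),
    fun j j' hj => hf (by exact_mod_cast (Fintype.orderIsoFinOfCardEq J rfl).symm.strictMono hj),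
    fun j => lt_of_lt_of_le hz (hf.monotone (Nat.zero_le _))⟩

lemma exists_upper_bound [Nonempty I] [NoMaxOrder I] (S : Finset I) :
    ∃ z : I, ∀ s ∈ S, s < z := by
  obtain ⟨m, hm⟩ := S.exists_le
  obtain ⟨z, hz⟩ := exists_gt m
  exact ⟨z, fun s hs => lt_of_le_of_lt (hm s hs) hz⟩

end OrderUtils

section Transfer

variable {M : Type w} [L.Structure M] {I : Type*} [LinearOrder I] {γ' : Type*}

/-- The assignment of sequence variables given by positions `w`. -/
def seqv (a : I → γ' → M) {J : Type*} (w : J → I) : J × γ' → M := fun p => a (w p.1) p.2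

lemma transferJ {a : I → γ' → M} (ha : IsIndiscernible (L := L) a)
    {J : Type*} [Fintype J] [LinearOrder J] {w w' : J → I}
    (hw : StrictMono w) (hw' : StrictMono w') (θ : L.Formula (J × γ')) :
    θ.Realize (seqv a w) ↔ θ.Realize (seqv a w') := by
  set oi := Fintype.orderIsoFinOfCardEq J rfl with hoi
  have key := ha (Fintype.card J) (w ∘ oi) (w' ∘ oi)
    (hw.comp oi.strictMono) (hw'.comp oi.strictMono)
    (θ.relabel (fun p => (oi.symm p.1, p.2)))
  rw [Formula.realize_relabel, Formula.realize_relabel] at key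
  have e1 : ∀ (u : J → I), ((fun p : Fin (Fintype.card J) × γ' => a ((u ∘ oi) p.1) p.2)
      ∘ (fun p : J × γ' => ((oi.symm p.1 : Fin (Fintype.card J)), p.2))) = seqv a u := by
    intro u
    funext p
    simp [seqv, Function.comp]
  rw [e1 w, e1 w'] at key
  exact key

/-- Decomposition of a parameter tuple drawn from the ranges of an indexed family. -/
lemma decomp_params {m : ℕ} (a : I → γ' → M) (S : Set I) (c : Fin m → M)
    (hc : ∀ t, ∃ i ∈ S, ∃ g, c t = a i g) :
    ∃ (l : ℕ) (w : Fin l → I) (pos : Fin m → Fin l) (coord : Fin m → γ'),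
      StrictMono w ∧ (∀ s, w s ∈ S) ∧ ∀ t, c t = a (w (pos t)) (coord t) := by
  classical
  choose idx hidxS coord hcoord using hc
  set F : Finset I := Finset.image idx Finset.univ with hF
  set oi := F.orderIsoOfFin (rfl : F.card = F.card)
  have hFS : ∀ x ∈ F, x ∈ S := by
    intro x hx
    rw [hF] at hx
    simp only [Finset.mem_image, Finset.mem_univ, true_and] at hx
    obtain ⟨t, ht⟩ := hx
    rw [← ht]; exact hidxS t
  refine ⟨F.card, fun s => (oi s : I), fun t => oi.symm ⟨idx t, by
      simp [hF]⟩, coord, fun s s' hs => ?_, fun s => ?_, fun t => ?_⟩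
  · exact Subtype.coe_lt_coe.2 (oi.strictMono hs)
  · exact hFS _ (oi s).2
  · rw [hcoord t]
    congr 1
    show idx t = ((oi (oi.symm ⟨idx t, by simp [hF]⟩)) : I)
    rw [OrderIso.apply_symm_apply]

end Transfer
section Glue

variable {M : Type w} [L.Structure M] {k : ℕ} (e : Fin k → Im L M) {α : Type*}

lemma grd_inf {χ χ' : L.Formula (α ⊕ ImVars e)} {v : α → M} {z : ImVars e → M} :
    grd e v (χ ⊓ χ') z ↔ grd e v χ z ∧ grd e v χ' z := by
  unfold grd
  constructor
  · intro h
    exact ⟨fun y hy => (Formula.realize_inf.1 (h y hy)).1,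
      fun y hy => (Formula.realize_inf.1 (h y hy)).2⟩
  · rintro ⟨h1, h2⟩ y hy
    exact Formula.realize_inf.2 ⟨h1 y hy, h2 y hy⟩

lemma grd_relabel {β β' : Type*} {g : β → β'} {χ : L.Formula (β ⊕ ImVars e)} {v : β' → M}
    {z : ImVars e → M} :
    grd e v (χ.relabel (Sum.map g id)) z ↔ grd e (v ∘ g) χ z := by
  unfold grd
  refine forall_congr' fun y => imp_congr Iff.rfl ?_
  rw [Formula.realize_relabel]
  rw [show (Sum.elim v y) ∘ (Sum.map g id) = Sum.elim (v ∘ g) y by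
    funext q; cases q <;> rfl]

lemma qs_inter {P Q : (ImVars e → M) → Prop}
    (hP : ∀ {x y}, eEq e x y → P x → P y) (hQ : ∀ {x y}, eEq e x y → Q x → Q y) :
    qs e (fun z => P z ∧ Q z) = qs e P ∩ qs e Q := by
  ext q
  constructor
  · rintro ⟨z, rfl, hz1, hz2⟩
    exact ⟨⟨z, rfl, hz1⟩, ⟨z, rfl, hz2⟩⟩
  · rintro ⟨⟨z, rfl, hz⟩, ⟨z', hz', hz'2⟩⟩
    exact ⟨z, rfl, hz, hQ (Quotient.exact hz') hz'2⟩

lemma grd_mono_equiv {χ : L.Formula (α ⊕ ImVars e)} {v : α → M} {x y : ImVars e → M}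
    (h : eEq e x y) (hx : grd e v χ x) : grd e v χ y :=
  (grd_congr e h).1 hx

lemma manyF_iff_le_card {χ : L.Formula (α ⊕ ImVars e)} {v : α → M}
    (hfin : (qs e (grd e v χ)).Finite) (s : ℕ) :
    (manyF e χ s).Realize v ↔ s ≤ hfin.toFinset.card := by
  rw [realize_manyF, exists_tuples_iff_card, exists_card_subset_iff hfin]

lemma finite_toFinset_card_eq {Q : Type*} {A B : Set Q} (hA : A.Finite) (hB : B.Finite)
    (h : ∀ s : ℕ, s ≤ hA.toFinset.card ↔ s ≤ hB.toFinset.card) :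
    hA.toFinset.card = hB.toFinset.card :=
  le_antisymm ((h _).1 le_rfl) ((h _).2 le_rfl)

/-- The singleton tuple of imaginaries. -/
def e1x (x : Im L M) : Fin 1 → Im L M := fun _ => x

/-- Transforming a formula on real variables and a class variable into the
imaginary-variable format. -/
noncomputable def toE1 (x : Im L M) (φ : L.Formula (Fin x.n ⊕ α)) :
    L.Formula (α ⊕ ImVars (e1x (M := M) x)) :=
  φ.relabel (Sum.elim (fun n => Sum.inr ⟨0, n⟩) Sum.inl)

lemma realize_toE1 {x : Im L M} {φ : L.Formula (Fin x.n ⊕ α)} {v : α → M}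
    {y : ImVars (e1x (M := M) x) → M} :
    (toE1 x φ).Realize (Sum.elim v y) ↔ φ.Realize (Sum.elim (fun n => y ⟨0, n⟩) v) := by
  rw [toE1]
  refine (Formula.realize_relabel (φ := φ)).trans ?_
  refine iff_of_eq (congrArg _ ?_)
  funext q; cases q <;> rfl

lemma eEq_e1x_iff {x : Im L M} {z y : ImVars (e1x (M := M) x) → M} :
    eEq (e1x (M := M) x) z y ↔ x.E.Realize (Sum.elim (fun n => z ⟨0, n⟩) (fun n => y ⟨0, n⟩)) := by
  constructor
  · intro h
    exact h 0
  · intro h r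
    have hr : r = 0 := Subsingleton.elim r 0
    subst hr
    exact h

/-- The class predicate set of a single imaginary is finite if the classes land in a
finite family of sets. -/
lemma qs_grd_finite_single {x : Im L M} {φ : L.Formula (Fin x.n ⊕ α)} {v : α → M}
    (hfin : {D : Set (Fin x.n → M) | (∃ b, D = {y | x.E.Realize (Sum.elim b y)}) ∧
      ∀ u ∈ D, φ.Realize (Sum.elim u v)}.Finite) :
    (qs (e1x (M := M) x) (grd (e1x (M := M) x) v (toE1 x φ))).Finite := by
  set S := {D : Set (Fin x.n → M) | (∃ b, D = {y | x.E.Realize (Sum.elim b y)}) ∧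
      ∀ u ∈ D, φ.Realize (Sum.elim u v)} with hS
  set F : Quotient (eStd (e1x (M := M) x)) → Set (Fin x.n → M) :=
    fun q => {u | x.E.Realize (Sum.elim (fun n => q.out ⟨0, n⟩) u)} with hFdef
  apply Set.Finite.of_finite_image (f := F) _ ?_
  · apply hfin.subset
    rintro D ⟨q, ⟨z, hz, hPz⟩, rfl⟩
    refine ⟨⟨_, rfl⟩, fun u hu => ?_⟩
    have hzq : eEq (e1x (M := M) x) z q.out :=
      Quotient.exact (by rw [hz, Quotient.out_eq] :
        Quotient.mk (eStd (e1x (M := M) x)) z = Quotient.mk (eStd (e1x (M := M) x)) q.out)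
    have hE : x.E.Realize (Sum.elim (fun n => z ⟨0, n⟩) u) := by
      apply x.isEqRel.2.2 _ (fun n => q.out ⟨0, n⟩) _ (eEq_e1x_iff.1 hzq) hu
    have := hPz (fun q' => u q'.2) (by
      rw [eEq_e1x_iff]; exact hE)
    rw [realize_toE1] at this
    exact this
  · intro q hq q' hq' hFq
    have h1 : (fun n => Quotient.out q' ⟨0, n⟩) ∈ F q' := by
      rw [hFdef]; exact x.isEqRel.1 _
    rw [← hFq] at h1
    have : eEq (e1x (M := M) x) q.out q'.out := by
      rw [eEq_e1x_iff]; exact h1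
    rw [← Quotient.out_eq q, ← Quotient.out_eq q']
    exact Quotient.sound this

end Glue
section Product

variable {M : Type w} [L.Structure M] {k : ℕ} (e : Fin k → Im L M)

/-- Restriction of an assignment to one imaginary coordinate. -/
def restrict1 (r : Fin k) (z : ImVars e → M) : ImVars (e1x (M := M) (e r)) → M :=
  fun q => z ⟨r, q.2⟩

/-- Update an assignment on one imaginary coordinate. -/
def update1 (r : Fin k) (y' : ImVars (e1x (M := M) (e r)) → M) (z : ImVars e → M) :
    ImVars e → M :=
  fun q => if h : q.1 = r then y' ⟨0, Fin.cast (congrArg (fun i => (e i).n) h) q.2⟩ else z q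

lemma eEq_update1 {r : Fin k} {y' : ImVars (e1x (M := M) (e r)) → M} {z : ImVars e → M}
    (hE : (e r).E.Realize (Sum.elim (fun m => z ⟨r, m⟩) (fun m => y' ⟨0, m⟩))) :
    eEq e z (update1 e r y' z) := by
  intro r'
  by_cases hr : r' = r
  · subst hr
    have : (fun m => update1 e r' y' z ⟨r', m⟩) = (fun m => y' ⟨0, m⟩) := by
      funext m
      simp only [update1, dif_pos rfl]
      congr 1
    rw [this]
    exact hE
  · have : (fun m => update1 e r y' z ⟨r', m⟩) = (fun m => z ⟨r', m⟩) := by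
      funext m
      simp only [update1, dif_neg hr]
    rw [this]
    exact (e r').isEqRel.1 _

lemma restrict1_update1 {r : Fin k} {y' : ImVars (e1x (M := M) (e r)) → M} {z : ImVars e → M} :
    restrict1 e r (update1 e r y' z) = fun q => y' ⟨0, q.2⟩ := by
  funext q
  simp only [restrict1, update1, dif_pos rfl]
  congr 1

lemma eEq_restrict1 {r : Fin k} {z z' : ImVars e → M} (h : eEq e z z') :
    eEq (e1x (M := M) (e r)) (restrict1 e r z) (restrict1 e r z') := by
  intro r'
  exact h r

/-- Finiteness of the class-tuple set from finiteness of the component class sets. -/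
lemma qs_finite_of_components {P : (ImVars e → M) → Prop}
    {Pr : ∀ r : Fin k, (ImVars (e1x (M := M) (e r)) → M) → Prop}
    (hPr : ∀ r z, P z → Pr r (restrict1 e r z))
    (hfin : ∀ r, (qs (e1x (M := M) (e r)) (Pr r)).Finite) :
    (qs e P).Finite := by
  classical
  set F : Quotient (eStd e) → (∀ r, Quotient (eStd (e1x (M := M) (e r)))) :=
    fun q => fun r => Quotient.mk _ (restrict1 e r q.out) with hF
  apply Set.Finite.of_finite_image (f := F) _ ?_
  · apply Set.Finite.subset (Set.Finite.pi (fun r => hfin r))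
    rintro f ⟨q, ⟨z, hz, hPz⟩, rfl⟩
    intro r _
    have hzq : eEq e z q.out := Quotient.exact (by rw [hz, Quotient.out_eq] :
      Quotient.mk (eStd e) z = Quotient.mk (eStd e) q.out)
    refine ⟨restrict1 e r z, ?_, hPr r z hPz⟩
    show Quotient.mk (eStd (e1x (M := M) (e r))) (restrict1 e r z)
      = Quotient.mk (eStd (e1x (M := M) (e r))) (restrict1 e r q.out)
    exact Quotient.sound (eEq_restrict1 e hzq)
  · intro q _ q' _ hFq
    have : eEq e q.out q'.out := by
      intro r
      have := congrFun hFq r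
      exact Quotient.exact this 0
    rw [← Quotient.out_eq q, ← Quotient.out_eq q']
    exact Quotient.sound this

end Product
section ChainLemma

variable {M : Type w} [L.Structure M] {I : Type*} [LinearOrder I] {γ' : Type*}

lemma qs_congr {k : ℕ} (e : Fin k → Im L M) {P Q : (ImVars e → M) → Prop}
    (h : ∀ z, P z ↔ Q z) : qs e P = qs e Q := by
  ext q
  exact exists_congr fun z => and_congr Iff.rfl (h z)

lemma qs_mono {k : ℕ} (e : Fin k → Im L M) {P Q : (ImVars e → M) → Prop}
    (h : ∀ z, P z → Q z) : qs e P ⊆ qs e Q := by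
  rintro q ⟨z, rfl, hz⟩
  exact ⟨z, rfl, h z hz⟩

lemma toFinset_card_congr {Q : Type*} {A B : Set Q} (h : A = B) (hA : A.Finite)
    (hB : B.Finite) : hA.toFinset.card = hB.toFinset.card := by
  subst h; rfl

lemma chain_stable {a : I → γ' → M} (ha : IsIndiscernible (L := L) a)
    {k : ℕ} (e : Fin k → Im L M)
    {Jl Jm Jh : Type*} [Fintype Jl] [LinearOrder Jl] [Fintype Jm] [LinearOrder Jm]
    [Fintype Jh] [LinearOrder Jh]
    (χfix : L.Formula (((Jl ⊕ₗ Jh) × γ') ⊕ ImVars e))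
    (χmov : L.Formula ((Jm × γ') ⊕ ImVars e))
    {wl : Jl → I} {wh : Jh → I} (hwl : StrictMono wl) (hwh : StrictMono wh)
    (hlh : ∀ l h, wl l < wh h)
    (hfin : (qs e (grd e (seqv a (fun j => Sum.elim wl wh (ofLex j))) χfix)).Finite)
    (c : Fin (2 ^ hfin.toFinset.card + 1) → Jm → I)
    (hc : ∀ t, StrictMono (c t))
    (hcc : ∀ t t', t < t' → ∀ m m', c t m < c t' m')
    (hlc : ∀ s l m, wl l < c s m) (hch : ∀ s m h, c s m < wh h) :
    ∀ t t', qs e (fun z => grd e (seqv a (fun j => Sum.elim wl wh (ofLex j))) χfix z ∧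
        grd e (seqv a (c t)) χmov z)
      = qs e (fun z => grd e (seqv a (fun j => Sum.elim wl wh (ofLex j))) χfix z ∧
        grd e (seqv a (c t')) χmov z) := by
  classical
  set wfh : (Jl ⊕ₗ Jh) → I := fun j => Sum.elim wl wh (ofLex j) with hwfh
  -- the single-window setting
  set embF1 : (Jl ⊕ₗ Jh) → (Jl ⊕ₗ (Jm ⊕ₗ Jh)) := fun j =>
    Sum.elim (fun l => toLex (Sum.inl l)) (fun h => toLex (Sum.inr (toLex (Sum.inr h))))
      (ofLex j) with hembF1
  set embM1 : Jm → (Jl ⊕ₗ (Jm ⊕ₗ Jh)) := fun m => toLex (Sum.inr (toLex (Sum.inl m)))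
    with hembM1
  set χ1 : L.Formula (((Jl ⊕ₗ (Jm ⊕ₗ Jh)) × γ') ⊕ ImVars e) :=
    χfix.relabel (Sum.map (Prod.map embF1 id) id)
      ⊓ χmov.relabel (Sum.map (Prod.map embM1 id) id) with hχ1
  set w1 : Fin (2 ^ hfin.toFinset.card + 1) → (Jl ⊕ₗ (Jm ⊕ₗ Jh)) → I := fun t j =>
    Sum.elim wl (fun j' => Sum.elim (c t) wh (ofLex j')) (ofLex j) with hw1def
  have hw1 : ∀ t, StrictMono (w1 t) := by
    intro t
    apply strictMono_sumLexElim hwl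
      (strictMono_sumLexElim (hc t) hwh (fun m h => hch t m h))
    intro l j'
    rcases j' with m | h
    · exact hlc t l m
    · exact hlh l h
  have hcomp1F : ∀ t, seqv a (w1 t) ∘ (Prod.map embF1 id) = seqv a wfh := by
    intro t
    funext p
    rcases p with ⟨j, g⟩
    rcases j with l | h <;> rfl
  have hcomp1M : ∀ t, seqv a (w1 t) ∘ (Prod.map embM1 id) = seqv a (c t) := by
    intro t
    funext p
    rfl
  have hgrd1 : ∀ t z, grd e (seqv a (w1 t)) χ1 z ↔
      (grd e (seqv a wfh) χfix z ∧ grd e (seqv a (c t)) χmov z) := by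
    intro t z
    rw [hχ1, grd_inf, grd_relabel, grd_relabel, hcomp1F, hcomp1M]
  -- the pair-window setting
  set embF2 : (Jl ⊕ₗ Jh) → (Jl ⊕ₗ ((Jm ⊕ₗ Jm) ⊕ₗ Jh)) := fun j =>
    Sum.elim (fun l => toLex (Sum.inl l)) (fun h => toLex (Sum.inr (toLex (Sum.inr h))))
      (ofLex j) with hembF2
  set embM21 : Jm → (Jl ⊕ₗ ((Jm ⊕ₗ Jm) ⊕ₗ Jh)) := fun m =>
    toLex (Sum.inr (toLex (Sum.inl (toLex (Sum.inl m))))) with hembM21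
  set embM22 : Jm → (Jl ⊕ₗ ((Jm ⊕ₗ Jm) ⊕ₗ Jh)) := fun m =>
    toLex (Sum.inr (toLex (Sum.inl (toLex (Sum.inr m))))) with hembM22
  set χ2 : L.Formula (((Jl ⊕ₗ ((Jm ⊕ₗ Jm) ⊕ₗ Jh)) × γ') ⊕ ImVars e) :=
    χfix.relabel (Sum.map (Prod.map embF2 id) id)
      ⊓ (χmov.relabel (Sum.map (Prod.map embM21 id) id)
        ⊓ χmov.relabel (Sum.map (Prod.map embM22 id) id)) with hχ2
  set w2 : Fin (2 ^ hfin.toFinset.card + 1) → Fin (2 ^ hfin.toFinset.card + 1) →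
      (Jl ⊕ₗ ((Jm ⊕ₗ Jm) ⊕ₗ Jh)) → I := fun t t' j =>
    Sum.elim wl (fun j' => Sum.elim (fun j'' => Sum.elim (c t) (c t') (ofLex j'')) wh
      (ofLex j')) (ofLex j) with hw2def
  have hw2 : ∀ t t', t < t' → StrictMono (w2 t t') := by
    intro t t' htt'
    apply strictMono_sumLexElim hwl
    · apply strictMono_sumLexElim
      · apply strictMono_sumLexElim (hc t) (hc t') (fun m m' => hcc t t' htt' m m')
      · exact hwh
      · intro j'' h
        rcases j'' with m | m
        · exact hch t m h
        · exact hch t' m h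
    · intro l j'
      rcases j' with j'' | h
      · rcases j'' with m | m
        · exact hlc t l m
        · exact hlc t' l m
      · exact hlh l h
  have hcomp2F : ∀ t t', seqv a (w2 t t') ∘ (Prod.map embF2 id) = seqv a wfh := by
    intro t t'
    funext p
    rcases p with ⟨j, g⟩
    rcases j with l | h <;> rfl
  have hcomp2M1 : ∀ t t', seqv a (w2 t t') ∘ (Prod.map embM21 id) = seqv a (c t) := by
    intro t t'; funext p; rfl
  have hcomp2M2 : ∀ t t', seqv a (w2 t t') ∘ (Prod.map embM22 id) = seqv a (c t') := by
    intro t t'; funext p; rfl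
  have hgrd2 : ∀ t t' z, grd e (seqv a (w2 t t')) χ2 z ↔
      (grd e (seqv a wfh) χfix z ∧
        (grd e (seqv a (c t)) χmov z ∧ grd e (seqv a (c t')) χmov z)) := by
    intro t t' z
    rw [hχ2, grd_inf, grd_inf, grd_relabel, grd_relabel, grd_relabel,
      hcomp2F, hcomp2M1, hcomp2M2]
  -- the sets
  set A : Fin (2 ^ hfin.toFinset.card + 1) → Set (Quotient (eStd e)) := fun t =>
    qs e (fun z => grd e (seqv a wfh) χfix z ∧ grd e (seqv a (c t)) χmov z) with hAdef
  have hAqs : ∀ t, A t = qs e (grd e (seqv a (w1 t)) χ1) :=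
    fun t => (qs_congr e (fun z => hgrd1 t z)).symm
  have hAfin : ∀ t, (A t).Finite := by
    intro t
    apply hfin.subset
    exact qs_mono e (fun z hz => hz.1)
  have hAint : ∀ t t', qs e (grd e (seqv a (w2 t t')) χ2) = A t ∩ A t' := by
    intro t t'
    rw [qs_congr e (hgrd2 t t')]
    have h1 : qs e (fun z => (grd e (seqv a wfh) χfix z ∧ grd e (seqv a (c t)) χmov z) ∧
        (grd e (seqv a wfh) χfix z ∧ grd e (seqv a (c t')) χmov z)) = A t ∩ A t' :=
      qs_inter e (fun {x y} h hx => ⟨(grd_congr e h).1 hx.1, (grd_congr e h).1 hx.2⟩)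
        (fun {x y} h hx => ⟨(grd_congr e h).1 hx.1, (grd_congr e h).1 hx.2⟩)
    rw [← h1]
    exact qs_congr e (fun z => by tauto)
  have hintfin : ∀ t t', (A t ∩ A t').Finite := fun t t' => ((hAfin t).inter_of_left _)
  have hAfin1 : ∀ t, (qs e (grd e (seqv a (w1 t)) χ1)).Finite := fun t => (hAqs t) ▸ hAfin t
  have hintfin1 : ∀ t t', (qs e (grd e (seqv a (w2 t t')) χ2)).Finite :=
    fun t t' => (hAint t t').symm ▸ hintfin t t'
  have key1 : ∀ t s, (s ≤ (hAfin t).toFinset.card ↔ (manyF e χ1 s).Realize (seqv a (w1 t))) := by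
    intro t s
    rw [manyF_iff_le_card e (hAfin1 t) s,
      toFinset_card_congr (hAqs t) (hAfin t) (hAfin1 t)]
  have key2 : ∀ t t' s, (s ≤ (hintfin t t').toFinset.card ↔
      (manyF e χ2 s).Realize (seqv a (w2 t t'))) := by
    intro t t' s
    rw [manyF_iff_le_card e (hintfin1 t t') s,
      toFinset_card_congr (hAint t t').symm (hintfin t t') (hintfin1 t t')]
  have hcard : ∀ t t', (hAfin t).toFinset.card = (hAfin t').toFinset.card := by
    intro t t'
    apply finite_toFinset_card_eq
    intro s
    rw [key1 t s, key1 t' s]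
    exact transferJ ha (hw1 t) (hw1 t') (manyF e χ1 s)
  have hintcard : ∀ t t' u u', t < t' → u < u' →
      (hintfin t t').toFinset.card = (hintfin u u').toFinset.card := by
    intro t t' u u' htt' huu'
    apply finite_toFinset_card_eq
    intro s
    rw [key2 t t' s, key2 u u' s]
    exact transferJ ha (hw2 t t' htt') (hw2 u u' huu') (manyF e χ2 s)
  -- pigeonhole
  have hintconv : ∀ t t', (hAfin t).toFinset ∩ (hAfin t').toFinset
      = (hintfin t t').toFinset :=
    fun t t' => (Set.Finite.toFinset_inter (hAfin t) (hAfin t') (hintfin t t')).symm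
  have hintsymm : ∀ t t', (hintfin t t').toFinset.card = (hintfin t' t).toFinset.card := by
    intro t t'
    rw [← hintconv, ← hintconv, Finset.inter_comm]
  have main := pigeonhole_finsets (W := hfin.toFinset) (A := fun t => (hAfin t).toFinset)
    (fun t => (Set.Finite.toFinset_subset_toFinset (hs := hAfin t) (ht := hfin)).2
      (qs_mono e (fun z hz => hz.1)))
    hcard ?_
  · intro t t'
    exact (Set.Finite.toFinset_inj (hs := hAfin t) (ht := hAfin t')).1 (main t t')
  · intro t t' u u' htt' huu'
    rcases lt_or_gt_of_ne htt' with h | h <;> rcases lt_or_gt_of_ne huu' with h' | h'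
    · rw [hintconv, hintconv]; exact hintcard _ _ _ _ h h'
    · rw [hintconv, hintconv, hintsymm u u']; exact hintcard _ _ _ _ h h'
    · rw [hintconv, hintconv, hintsymm t t']; exact hintcard _ _ _ _ h h'
    · rw [hintconv, hintconv, hintsymm t t', hintsymm u u']; exact hintcard _ _ _ _ h h'

end ChainLemma
section StageII

variable {M : Type w} [L.Structure M] {I : Type*} [LinearOrder I] {γ' : Type*}

lemma fin0_strictMono {f : Fin 0 → I} : StrictMono f := fun a => a.elim0

/-- Transport of the right-hand algebraicity witness to arbitrary high positions. -/
lemma stage_two {a : I → γ' → M} (ha : IsIndiscernible (L := L) a)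
    [Nonempty I] [NoMaxOrder I]
    (x : Im L M) {l0 l1 m0 m1 : ℕ}
    {wp : Fin l0 → I} {wq : Fin l1 → I} (hwp : StrictMono wp) (hwq : StrictMono wq)
    (hpq : ∀ s t, wp s < wq t)
    (φ0 : L.Formula (Fin x.n ⊕ Fin m0)) (pos0 : Fin m0 → Fin l0) (coord0 : Fin m0 → γ')
    (φ1 : L.Formula (Fin x.n ⊕ Fin m1)) (pos1 : Fin m1 → Fin l1) (coord1 : Fin m1 → γ')
    (h0 : ∀ u ∈ x.cls, φ0.Realize (Sum.elim u (fun t => a (wp (pos0 t)) (coord0 t))))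
    (h1 : ∀ u ∈ x.cls, φ1.Realize (Sum.elim u (fun t => a (wq (pos1 t)) (coord1 t))))
    (hfin0 : {D : Set (Fin x.n → M) | (∃ b, D = {y | x.E.Realize (Sum.elim b y)}) ∧
      ∀ u ∈ D, φ0.Realize (Sum.elim u (fun t => a (wp (pos0 t)) (coord0 t)))}.Finite) :
    ∀ wq' : Fin l1 → I, StrictMono wq' → (∀ s t, wp s < wq' t) →
      ∀ u ∈ x.cls, φ1.Realize (Sum.elim u (fun t => a (wq' (pos1 t)) (coord1 t))) := by
  intro wq' hwq' hpq' u hu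
  classical
  set e1 := e1x (M := M) x with he1
  set σ0 : Fin m0 → ((Fin l0 ⊕ₗ Fin 0) × γ') := fun t => (toLex (Sum.inl (pos0 t)), coord0 t)
    with hσ0
  set σ1 : Fin m1 → (Fin l1 × γ') := fun t => (pos1 t, coord1 t) with hσ1
  set χfix : L.Formula (((Fin l0 ⊕ₗ Fin 0) × γ') ⊕ ImVars e1) :=
    (toE1 x φ0).relabel (Sum.map σ0 id) with hχfix
  set χmov : L.Formula ((Fin l1 × γ') ⊕ ImVars e1) :=
    (toE1 x φ1).relabel (Sum.map σ1 id) with hχmov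
  set wfh : (Fin l0 ⊕ₗ Fin 0) → I := fun j => Sum.elim wp Fin.elim0 (ofLex j) with hwfh
  -- the fixed part of the window
  have hgrdfix : ∀ z, grd e1 (seqv a wfh) χfix z ↔
      grd e1 (fun t => a (wp (pos0 t)) (coord0 t)) (toE1 x φ0) z := by
    intro z
    rw [hχfix, grd_relabel]
    have : (seqv a wfh) ∘ σ0 = fun t => a (wp (pos0 t)) (coord0 t) := by
      funext t; rfl
    rw [this]
  have hfin : (qs e1 (grd e1 (seqv a wfh) χfix)).Finite := by
    rw [qs_congr e1 hgrdfix]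
    exact qs_grd_finite_single hfin0
  set R := hfin.toFinset.card with hR
  -- an upper bound for everything in sight
  obtain ⟨z0, hz0⟩ := exists_upper_bound
    ((Finset.image wq Finset.univ) ∪ (Finset.image wq' Finset.univ)
      ∪ (Finset.image wp Finset.univ))
  have hz0q : ∀ t, wq t < z0 := fun t => hz0 _ (by simp)
  have hz0q' : ∀ t, wq' t < z0 := fun t => hz0 _ (by simp)
  have hz0p : ∀ t, wp t < z0 := fun t => hz0 _ (by simp)
  obtain ⟨f, hf, hzf⟩ := exists_nat_chain_above z0
  have hfz : ∀ n, z0 < f n := fun n => lt_of_lt_of_le hzf (hf.monotone (Nat.zero_le _))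
  -- the chunks
  have hpow : 0 < 2 ^ R := Nat.pow_pos (by omega)
  set chunk : Fin (2 ^ R) → Fin l1 → I := fun t s => f (t.val * l1 + s.val) with hchunk
  have hchunkmono : ∀ t, StrictMono (chunk t) := by
    intro t s s' hss'
    apply hf
    omega
  have hchunkcross : ∀ t t', t < t' → ∀ s s', chunk t s < chunk t' s' := by
    intro t t' htt' s s'
    apply hf
    have h1 : s.val < l1 := s.isLt
    have h2 : t.val < t'.val := htt'
    calc t.val * l1 + s.val < t.val * l1 + l1 := by omega
    _ = (t.val + 1) * l1 := by ring
    _ ≤ t'.val * l1 := Nat.mul_le_mul_right _ (by omega)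
    _ ≤ t'.val * l1 + s'.val := Nat.le_add_right _ _
  have hchunkhigh : ∀ t s, z0 < chunk t s := fun t s => hfz _
  -- the two chains
  have happ : ∀ cz : Fin l1 → I, StrictMono cz → (∀ s t, wp s < cz t) →
      (∀ s t, cz s < chunk ⟨0, hpow⟩ t) →
      qs e1 (fun z => grd e1 (seqv a wfh) χfix z ∧ grd e1 (seqv a cz) χmov z)
        = qs e1 (fun z => grd e1 (seqv a wfh) χfix z ∧
            grd e1 (seqv a (chunk ⟨0, hpow⟩)) χmov z) := by
    intro cz hcz hpcz hczchunk
    have hczchunk' : ∀ (t : Fin (2 ^ R)) s s', cz s < chunk t s' := by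
      intro t s s'
      rcases Nat.eq_zero_or_pos t.val with h | h
      · have ht : t = ⟨0, hpow⟩ := Fin.ext h
        rw [ht]
        exact hczchunk s s'
      · exact lt_trans (hczchunk s s')
          (hchunkcross ⟨0, hpow⟩ t (by rw [Fin.lt_def]; exact h) s' s')
    set c : Fin (2 ^ R + 1) → Fin l1 → I := Fin.cases cz chunk with hc
    have hcmono : ∀ t, StrictMono (c t) := by
      intro t
      induction t using Fin.cases with
      | zero => exact hcz
      | succ t => exact hchunkmono t
    have hccross : ∀ t t', t < t' → ∀ m m', c t m < c t' m' := by
      intro t t' htt' m m'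
      induction t using Fin.cases with
      | zero =>
        induction t' using Fin.cases with
        | zero => exact absurd htt' (lt_irrefl _)
        | succ t' => exact hczchunk' t' m m'
      | succ t =>
        induction t' using Fin.cases with
        | zero => exact absurd htt' (Fin.not_lt_zero _)
        | succ t' =>
          exact hchunkcross t t' (Fin.succ_lt_succ_iff.mp htt') m m'
    have hlc : ∀ (s : Fin (2 ^ R + 1)) (l : Fin l0) (m : Fin l1), wp l < c s m := by
      intro s l m
      induction s using Fin.cases with
      | zero => exact hpcz l m
      | succ s => exact lt_trans (hz0p l) (hchunkhigh s m)
    have := chain_stable ha e1 χfix χmov hwp fin0_strictMono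
      (fun l h => h.elim0) hfin c hcmono hccross hlc
      (fun s m h => h.elim0) ⟨0, Nat.succ_pos _⟩ (Fin.succ ⟨0, hpow⟩)
    have hc0 : c ⟨0, Nat.succ_pos _⟩ = cz := rfl
    have hc1 : c (Fin.succ ⟨0, hpow⟩)
        = chunk ⟨0, hpow⟩ := by
      rw [hc]
      exact Fin.cases_succ _
    rw [hc0, hc1] at this
    exact this
  have heq := (happ wq hwq hpq (fun s t => lt_trans (hz0q s) (hchunkhigh _ t))).trans
    (happ wq' hwq' hpq' (fun s t => lt_trans (hz0q' s) (hchunkhigh _ t))).symm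
  -- membership of the class of x
  set zu : ImVars e1 → M := fun q => u q.2 with hzu
  have hinv : ∀ {z1 z2 : ImVars e1 → M}, eEq e1 z1 z2 →
      ((fun z => grd e1 (seqv a wfh) χfix z ∧ grd e1 (seqv a wq) χmov z) z1 ↔
        (fun z => grd e1 (seqv a wfh) χfix z ∧ grd e1 (seqv a wq) χmov z) z2) :=
    fun h => and_congr (grd_congr e1 h) (grd_congr e1 h)
  have hinv' : ∀ {z1 z2 : ImVars e1 → M}, eEq e1 z1 z2 →
      ((fun z => grd e1 (seqv a wfh) χfix z ∧ grd e1 (seqv a wq') χmov z) z1 ↔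
        (fun z => grd e1 (seqv a wfh) χfix z ∧ grd e1 (seqv a wq') χmov z) z2) :=
    fun h => and_congr (grd_congr e1 h) (grd_congr e1 h)
  have hcur : ∀ (y : ImVars e1 → M), eEq e1 zu y ↔ (fun n => y ⟨0, n⟩) ∈ x.cls := by
    intro y
    rw [eEq_e1x_iff]
    constructor
    · intro h
      exact x.mem_of_rel hu h
    · intro h
      exact x.rel_of_mem hu h
  have hgrdmov : ∀ (wc : Fin l1 → I) (z : ImVars e1 → M), grd e1 (seqv a wc) χmov z ↔
      ∀ y, eEq e1 z y → φ1.Realize (Sum.elim (fun n => y ⟨0, n⟩)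
        (fun t => a (wc (pos1 t)) (coord1 t))) := by
    intro wc z
    rw [hχmov, grd_relabel]
    have : (seqv a wc) ∘ σ1 = fun t => a (wc (pos1 t)) (coord1 t) := by funext t; rfl
    rw [this]
    unfold grd
    exact forall_congr' fun y => imp_congr Iff.rfl realize_toE1
  have hmem : Quotient.mk (eStd e1) zu ∈
      qs e1 (fun z => grd e1 (seqv a wfh) χfix z ∧ grd e1 (seqv a wq) χmov z) := by
    rw [mem_qs_iff e1 (fun {z1 z2} h => hinv h)]
    constructor
    · rw [hgrdfix]
      intro y hy
      rw [realize_toE1]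
      exact h0 _ ((hcur y).1 hy)
    · rw [hgrdmov]
      intro y hy
      exact h1 _ ((hcur y).1 hy)
  rw [heq] at hmem
  rw [mem_qs_iff e1 (fun {z1 z2} h => hinv' h)] at hmem
  have := (hgrdmov wq' zu).1 hmem.2 zu (eEq_refl e1 zu)
  exact this

end StageII
section BMain

variable {M : Type w} [L.Structure M] {I : Type*} [LinearOrder I] {γ' : Type*}

/-- Transfer of class-set finiteness between positions. -/
lemma qs_finite_transfer {a : I → γ' → M} (ha : IsIndiscernible (L := L) a)
    (x : Im L M) {l m : ℕ} (φ : L.Formula (Fin x.n ⊕ Fin m))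
    (pos : Fin m → Fin l) (coord : Fin m → γ') {wq wq' : Fin l → I}
    (hwq : StrictMono wq) (hwq' : StrictMono wq')
    (hfin : (qs (e1x (M := M) x) (grd (e1x (M := M) x)
      (fun t => a (wq (pos t)) (coord t)) (toE1 x φ))).Finite) :
    (qs (e1x (M := M) x) (grd (e1x (M := M) x)
      (fun t => a (wq' (pos t)) (coord t)) (toE1 x φ))).Finite := by
  classical
  set e1 := e1x (M := M) x with he1
  set σ : Fin m → (Fin l × γ') := fun t => (pos t, coord t) with hσ
  set χ : L.Formula ((Fin l × γ') ⊕ ImVars e1) := (toE1 x φ).relabel (Sum.map σ id) with hχ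
  have hgrd : ∀ (wc : Fin l → I) z, grd e1 (seqv a wc) χ z ↔
      grd e1 (fun t => a (wc (pos t)) (coord t)) (toE1 x φ) z := by
    intro wc z
    rw [hχ, grd_relabel]
    have : (seqv a wc) ∘ σ = fun t => a (wc (pos t)) (coord t) := by funext t; rfl
    rw [this]
  have hfinw : (qs e1 (grd e1 (seqv a wq) χ)).Finite := by
    rw [qs_congr e1 (hgrd wq)]; exact hfin
  set N := hfinw.toFinset.card with hN
  have hnot : ¬ (manyF e1 χ (N + 1)).Realize (seqv a wq) := by
    rw [manyF_iff_le_card e1 hfinw]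
    omega
  rw [transferJ ha hwq hwq' (manyF e1 χ (N + 1))] at hnot
  rw [realize_manyF, exists_tuples_iff_card] at hnot
  have : (qs e1 (grd e1 (seqv a wq') χ)).Finite := finite_of_not_exists_card hnot
  rw [qs_congr e1 (hgrd wq')] at this
  exact this

/-- Converse direction : from `qs`-finiteness to finiteness of the family of classes. -/
lemma classes_finite_of_qs {x : Im L M} {m : ℕ} {φ : L.Formula (Fin x.n ⊕ Fin m)}
    {v : Fin m → M}
    (hfin : (qs (e1x (M := M) x) (grd (e1x (M := M) x) v (toE1 x φ))).Finite) :
    {D : Set (Fin x.n → M) | (∃ b, D = {y | x.E.Realize (Sum.elim b y)}) ∧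
      ∀ u ∈ D, φ.Realize (Sum.elim u v)}.Finite := by
  classical
  set e1 := e1x (M := M) x with he1
  set S := {D : Set (Fin x.n → M) | (∃ b, D = {y | x.E.Realize (Sum.elim b y)}) ∧
      ∀ u ∈ D, φ.Realize (Sum.elim u v)} with hS
  rcases Set.eq_empty_or_nonempty S with hemp | ⟨D0, hD0⟩
  · rw [hemp]; exact Set.finite_empty
  obtain ⟨b0, _⟩ := hD0.1
  set dflt : ImVars e1 → M := fun q => b0 q.2 with hdflt
  set G : Set (Fin x.n → M) → Quotient (eStd e1) := fun D =>
    if h : ∃ b, D = {y | x.E.Realize (Sum.elim b y)} then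
      Quotient.mk (eStd e1) (fun q => h.choose q.2)
    else Quotient.mk (eStd e1) dflt with hG
  apply Set.Finite.of_finite_image (f := G) _ ?_
  · apply hfin.subset
    rintro q ⟨D, hD, rfl⟩
    simp only [hG, dif_pos hD.1]
    refine ⟨_, rfl, ?_⟩
    intro y hy
    rw [realize_toE1]
    apply hD.2
    rw [hD.1.choose_spec]
    exact (eEq_e1x_iff.1 hy : _)
  · intro D hD D' hD' hGDD'
    simp only [hG, dif_pos hD.1, dif_pos hD'.1] at hGDD'
    have hE : eEq e1 (fun q => hD.1.choose q.2) (fun q => hD'.1.choose q.2) :=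
      Quotient.exact hGDD'
    have hE' : x.E.Realize (Sum.elim hD.1.choose hD'.1.choose) := eEq_e1x_iff.1 hE
    rw [hD.1.choose_spec, hD'.1.choose_spec]
    ext y
    constructor
    · intro hy
      exact x.isEqRel.2.2 _ _ _ (x.isEqRel.2.1 _ _ hE') hy
    · intro hy
      exact x.isEqRel.2.2 _ _ _ hE' hy

end BMain
section BMain2

variable {M : Type w} [L.Structure M] {I : Type*} [LinearOrder I] {γ' : Type*}

/-- Relabel a formula about the `r`-th imaginary into the tuple format. -/
noncomputable def toEr {k : ℕ} (e : Fin k → Im L M) (r : Fin k) {α : Type*}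
    (φ : L.Formula (Fin ((e r).n) ⊕ α)) : L.Formula (α ⊕ ImVars e) :=
  φ.relabel (Sum.elim (fun v => Sum.inr ⟨r, v⟩) Sum.inl)

lemma realize_toEr {k : ℕ} {e : Fin k → Im L M} {r : Fin k} {α : Type*}
    {φ : L.Formula (Fin ((e r).n) ⊕ α)} {v : α → M} {y : ImVars e → M} :
    (toEr e r φ).Realize (Sum.elim v y) ↔
      φ.Realize (Sum.elim (fun nn => y ⟨r, nn⟩) v) := by
  rw [toEr, Formula.realize_relabel]
  rw [show (Sum.elim v y) ∘ (Sum.elim (fun v => (Sum.inr ⟨r, v⟩ : α ⊕ ImVars e)) Sum.inl)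
    = Sum.elim (fun nn => y ⟨r, nn⟩) v by funext q; cases q <;> rfl]

lemma indisc_over_tuple {a : I → γ' → M} (ha : IsIndiscernible (L := L) a)
    [Nonempty I] [NoMaxOrder I] {k : ℕ} (e : Fin k → Im L M)
    (l1 m1 : Fin k → ℕ)
    (φ1 : ∀ r : Fin k, L.Formula (Fin ((e r).n) ⊕ Fin (m1 r)))
    (pos1 : ∀ r, Fin (m1 r) → Fin (l1 r)) (coord1 : ∀ r, Fin (m1 r) → γ')
    (z1 : I)
    (hsat : ∀ r (wq' : Fin (l1 r) → I), StrictMono wq' → (∀ t, z1 < wq' t) →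
      ∀ u ∈ (e r).cls, (φ1 r).Realize (Sum.elim u (fun t => a (wq' (pos1 r t)) (coord1 r t))))
    (hqsfin : ∀ r (wq' : Fin (l1 r) → I), StrictMono wq' →
      (qs (e1x (M := M) (e r)) (grd (e1x (M := M) (e r))
        (fun t => a (wq' (pos1 r t)) (coord1 r t)) (toE1 (e r) (φ1 r)))).Finite) :
    IsIndiscernibleOverIm (L := L) e a := by
  intro n i j hi hj ψ hψ crep hcrep
  classical
  set Jb := Lex ((r : Fin k) × Fin (l1 r)) with hJb
  set σb : ∀ r : Fin k, Fin (m1 r) → ((Fin 0 ⊕ₗ Jb) × γ') := fun r t =>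
    (toLex (Sum.inr (toLex ⟨r, pos1 r t⟩)), coord1 r t) with hσb
  set χfix : L.Formula (((Fin 0 ⊕ₗ Jb) × γ') ⊕ ImVars e) :=
    BoundedFormula.iInf
      (fun r : Fin k => (toEr e r (φ1 r)).relabel (Sum.map (σb r) id)) with hχfix
  have hrealfix : ∀ (v : (Fin 0 ⊕ₗ Jb) × γ' → M) (y : ImVars e → M),
      χfix.Realize (Sum.elim v y) ↔ ∀ r : Fin k,
        (φ1 r).Realize (Sum.elim (fun nn => y ⟨r, nn⟩) (fun t => v (σb r t))) := by
    intro v y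
    rw [hχfix, Formula.Realize, BoundedFormula.realize_iInf]
    refine forall_congr' fun r => ?_
    rw [show BoundedFormula.Realize ((toEr e r (φ1 r)).relabel (Sum.map (σb r) id))
        (Sum.elim v y) default
      ↔ ((toEr e r (φ1 r)).relabel (Sum.map (σb r) id)).Realize (Sum.elim v y) from Iff.rfl]
    rw [Formula.realize_relabel]
    rw [show (Sum.elim v y) ∘ (Sum.map (σb r) id) = Sum.elim (fun t => v (σb r t)) y by
      funext q; cases q <;> rfl]
    rw [realize_toEr]
  -- upper bounds and the chain
  obtain ⟨zmax, hzmax⟩ := exists_upper_bound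
    ({z1} ∪ Finset.image i Finset.univ ∪ Finset.image j Finset.univ)
  have hz1 : z1 < zmax := hzmax _ (by simp)
  have hiz : ∀ s, i s < zmax := fun s => hzmax _ (by simp)
  have hjz : ∀ s, j s < zmax := fun s => hzmax _ (by simp)
  obtain ⟨f, hf, hzf⟩ := exists_nat_chain_above zmax
  have hfz : ∀ nn, zmax < f nn := fun nn => lt_of_lt_of_le hzf (hf.monotone (Nat.zero_le _))
  -- provisional blocks
  obtain ⟨wb0, hwb0, hwb0z⟩ := exists_strictMono_above Jb zmax
  have hmonosig : ∀ (wb : Jb → I), StrictMono wb → ∀ r : Fin k,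
      StrictMono (fun s : Fin (l1 r) => wb (toLex ⟨r, s⟩)) := by
    intro wb hwb r s s' hss'
    exact hwb (by
      rw [Sigma.Lex.lt_def]
      exact Or.inr ⟨rfl, hss'⟩)
  have hwfhmono : ∀ (wb : Jb → I), StrictMono wb →
      StrictMono (fun jj : Fin 0 ⊕ₗ Jb => Sum.elim Fin.elim0 wb (ofLex jj)) := by
    intro wb hwb
    exact strictMono_sumLexElim fin0_strictMono hwb (fun l _ => l.elim0)
  -- the component description of the fixed predicate
  have hgrdfix : ∀ (wb : Jb → I) (z : ImVars e → M),
      grd e (seqv a (fun jj : Fin 0 ⊕ₗ Jb => Sum.elim Fin.elim0 wb (ofLex jj))) χfix z ↔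
        ∀ y, eEq e z y → ∀ r : Fin k, (φ1 r).Realize (Sum.elim (fun nn => y ⟨r, nn⟩)
          (fun t => a (wb (toLex ⟨r, pos1 r t⟩)) (coord1 r t))) := by
    intro wb z
    unfold grd
    refine forall_congr' fun y => imp_congr Iff.rfl ?_
    rw [hrealfix]
    rfl
  have hfincomp : ∀ (wb : Jb → I), StrictMono wb →
      (qs e (grd e (seqv a (fun jj : Fin 0 ⊕ₗ Jb => Sum.elim Fin.elim0 wb (ofLex jj)))
        χfix)).Finite := by
    intro wb hwb
    apply qs_finite_of_components e
      (Pr := fun r => grd (e1x (M := M) (e r))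
        (fun t => a (wb (toLex ⟨r, pos1 r t⟩)) (coord1 r t)) (toE1 (e r) (φ1 r)))
    · intro r z hz y' hy'
      rw [realize_toE1]
      set y := update1 e r y' z with hy
      have hzy : eEq e z y := eEq_update1 e (eEq_e1x_iff.1 hy')
      have hcomp := (hgrdfix wb z).1 hz y hzy r
      have hyy' : (fun nn => y ⟨r, nn⟩) = (fun nn => y' ⟨0, nn⟩) := by
        funext nn
        exact congrFun (restrict1_update1 e) ⟨0, nn⟩
      rw [hyy'] at hcomp
      exact hcomp
    · intro r
      exact hqsfin r _ (hmonosig wb hwb r)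
  have hfin0 := hfincomp wb0 hwb0
  set N := hfin0.toFinset.card with hN
  -- the final blocks
  obtain ⟨wb1, hwb1, hwb1z⟩ := exists_strictMono_above Jb (f (2 ^ N * n + n))
  have hfin1 := hfincomp wb1 hwb1
  have hcard1 : hfin1.toFinset.card = N := by
    apply finite_toFinset_card_eq
    intro s
    rw [← manyF_iff_le_card e hfin1 s, ← manyF_iff_le_card e hfin0 s]
    exact transferJ ha (hwfhmono wb1 hwb1) (hwfhmono wb0 hwb0) (manyF e χfix s)
  have hpow1 : 0 < 2 ^ hfin1.toFinset.card := Nat.pow_pos (by omega)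
  -- the chunks
  set chunk : Fin (2 ^ hfin1.toFinset.card) → Fin n → I := fun t s => f (t.val * n + s.val)
    with hchunk
  have hchunkmono : ∀ t, StrictMono (chunk t) := by
    intro t s s' hss'
    apply hf
    omega
  have hchunkcross : ∀ t t', t < t' → ∀ s s', chunk t s < chunk t' s' := by
    intro t t' htt' s s'
    apply hf
    have h1 : s.val < n := s.isLt
    have h2 : t.val < t'.val := htt'
    calc t.val * n + s.val < t.val * n + n := by omega
    _ = (t.val + 1) * n := by ring
    _ ≤ t'.val * n := Nat.mul_le_mul_right _ (by omega)
    _ ≤ t'.val * n + s'.val := Nat.le_add_right _ _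
  have hchunklow : ∀ t s, zmax < chunk t s := fun t s => hfz _
  have hchunkhigh : ∀ t s (jb : Jb), chunk t s < wb1 jb := by
    intro t s jb
    apply lt_trans _ (hwb1z jb)
    apply hf
    have h1 : t.val < 2 ^ N := by rw [← hcard1]; exact t.isLt
    have h2 : s.val < n := s.isLt
    have := Nat.succ_le_of_lt h1
    calc t.val * n + s.val < t.val * n + n := by omega
    _ = (t.val + 1) * n := by ring
    _ ≤ 2 ^ N * n := Nat.mul_le_mul_right _ (by omega)
    _ ≤ 2 ^ N * n + n := Nat.le_add_right _ _
  -- the two chain applications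
  have happ : ∀ cz : Fin n → I, StrictMono cz → (∀ s, cz s < zmax) →
      qs e (fun z => grd e (seqv a (fun jj : Fin 0 ⊕ₗ Jb =>
          Sum.elim Fin.elim0 wb1 (ofLex jj))) χfix z ∧ grd e (seqv a cz) ψ z)
        = qs e (fun z => grd e (seqv a (fun jj : Fin 0 ⊕ₗ Jb =>
            Sum.elim Fin.elim0 wb1 (ofLex jj))) χfix z ∧
              grd e (seqv a (chunk ⟨0, hpow1⟩)) ψ z) := by
    intro cz hcz hczmax
    set c : Fin (2 ^ hfin1.toFinset.card + 1) → Fin n → I := Fin.cases cz chunk with hc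
    have hcmono : ∀ t, StrictMono (c t) := by
      intro t
      induction t using Fin.cases with
      | zero => exact hcz
      | succ t => exact hchunkmono t
    have hccross : ∀ t t', t < t' → ∀ m m', c t m < c t' m' := by
      intro t t' htt' m m'
      induction t using Fin.cases with
      | zero =>
        induction t' using Fin.cases with
        | zero => exact absurd htt' (lt_irrefl _)
        | succ t' => exact lt_trans (hczmax m) (hchunklow t' m')
      | succ t =>
        induction t' using Fin.cases with
        | zero => exact absurd htt' (Fin.not_lt_zero _)
        | succ t' => exact hchunkcross t t' (Fin.succ_lt_succ_iff.mp htt') m m'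
    have hch : ∀ (s : Fin (2 ^ hfin1.toFinset.card + 1)) (m : Fin n) (hb : Jb),
        c s m < wb1 hb := by
      intro s m hb
      induction s using Fin.cases with
      | zero => exact lt_trans (lt_trans (hczmax m) (hfz (2 ^ N * n + n))) (hwb1z hb)
      | succ s => exact hchunkhigh s m hb
    have := chain_stable ha e χfix ψ fin0_strictMono hwb1
      (fun l _ => l.elim0) hfin1 c hcmono hccross (fun s l m => l.elim0)
      hch ⟨0, Nat.succ_pos _⟩ (Fin.succ ⟨0, hpow1⟩)
    have hc0 : c ⟨0, Nat.succ_pos _⟩ = cz := rfl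
    have hc1 : c (Fin.succ ⟨0, hpow1⟩) = chunk ⟨0, hpow1⟩ := by
      rw [hc]; exact Fin.cases_succ _
    rw [hc0, hc1] at this
    exact this
  have heq := (happ i hi hiz).trans (happ j hj hjz).symm
  -- extraction
  set zu : ImVars e → M := fun q => crep q.1 q.2 with hzu
  have hcur : ∀ y : ImVars e → M, eEq e zu y → IsRep (L := L) e (fun r mm => y ⟨r, mm⟩) := by
    intro y hy
    exact (isRep_repv_iff e hcrep).1 hy
  have hfixzu : grd e (seqv a (fun jj : Fin 0 ⊕ₗ Jb =>
      Sum.elim Fin.elim0 wb1 (ofLex jj))) χfix zu := by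
    rw [hgrdfix]
    intro y hy r
    apply hsat r (fun s => wb1 (toLex ⟨r, s⟩)) (hmonosig wb1 hwb1 r)
      (fun t => lt_trans (lt_trans hz1 (hfz _)) (hwb1z _))
    exact hcur y hy r
  have hmoviff : ∀ cz : Fin n → I,
      (grd e (seqv a cz) ψ zu ↔ ψ.Realize (Sum.elim (seqv a cz) zu)) := by
    intro cz
    constructor
    · intro h
      exact h zu (eEq_refl e zu)
    · intro h y hy
      have := hψ (seqv a cz) crep (fun r mm => y ⟨r, mm⟩) hcrep (hcur y hy)
      rw [← this]
      exact h
  have hmem : ∀ cz : Fin n → I,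
      (Quotient.mk (eStd e) zu ∈ qs e (fun z => grd e (seqv a (fun jj : Fin 0 ⊕ₗ Jb =>
          Sum.elim Fin.elim0 wb1 (ofLex jj))) χfix z ∧ grd e (seqv a cz) ψ z)
        ↔ ψ.Realize (Sum.elim (seqv a cz) zu)) := by
    intro cz
    rw [mem_qs_iff e (fun {z1 z2} h =>
      and_congr (grd_congr e h) (grd_congr e h))]
    rw [← hmoviff cz]
    exact ⟨fun h => h.2, fun h => ⟨hfixzu, h⟩⟩
  have := ((hmem i).symm.trans (by rw [heq])).trans (hmem j)
  exact this

end BMain2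
section KernelIndisc

variable {M : Type w} [L.Structure M] {I : Type*} [LinearOrder I] {γ' : Type*}

lemma kernel_indisc {a : I → γ' → M} (ha : IsIndiscernible (L := L) a)
    [Nonempty I] [NoMaxOrder I] :
    IsIndiscernibleOverImSet (L := L) (kernel (L := L) a) a := by
  intro k e he
  classical
  have hdata : ∀ r : Fin k, ∃ (l1 m1 : ℕ) (φ1 : L.Formula (Fin ((e r).n) ⊕ Fin m1))
      (pos1 : Fin m1 → Fin l1) (coord1 : Fin m1 → γ') (zr : I),
      (∀ wq' : Fin l1 → I, StrictMono wq' → (∀ t, zr < wq' t) →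
        ∀ u ∈ (e r).cls, φ1.Realize (Sum.elim u (fun t => a (wq' (pos1 t)) (coord1 t)))) ∧
      (∀ wq' : Fin l1 → I, StrictMono wq' →
        (qs (e1x (M := M) (e r)) (grd (e1x (M := M) (e r))
          (fun t => a (wq' (pos1 t)) (coord1 t)) (toE1 (e r) φ1))).Finite) := by
    intro r
    obtain ⟨I0, I1, hcut, h0, h1⟩ := he r
    obtain ⟨m0, c0, φ0, hc0X, hinv0, hsat0, hfin0⟩ := h0
    obtain ⟨m1, c1, φ1, hc1X, hinv1, hsat1, hfin1⟩ := h1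
    obtain ⟨l0, wp, pos0, coord0, hwp, hwpS, hc0⟩ := decomp_params a I0 c0 (by
      intro t
      have := hc0X t
      simp only [Set.mem_iUnion, Set.mem_range] at this
      obtain ⟨i, hi, g, hg⟩ := this
      exact ⟨i, hi, g, hg.symm⟩)
    obtain ⟨l1, wq, pos1, coord1, hwq, hwqS, hc1⟩ := decomp_params a I1 c1 (by
      intro t
      have := hc1X t
      simp only [Set.mem_iUnion, Set.mem_range] at this
      obtain ⟨i, hi, g, hg⟩ := this
      exact ⟨i, hi, g, hg.symm⟩)
    have hc0e : c0 = fun t => a (wp (pos0 t)) (coord0 t) := funext hc0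
    have hc1e : c1 = fun t => a (wq (pos1 t)) (coord1 t) := funext hc1
    rw [hc0e] at hsat0 hfin0
    rw [hc1e] at hsat1 hfin1
    have hpq : ∀ s t, wp s < wq t := fun s t => hcut _ (hwpS s) _ (hwqS t)
    obtain ⟨zr, hzr⟩ := exists_upper_bound (Finset.image wp Finset.univ)
    have hzrw : ∀ s, wp s < zr := fun s => hzr _ (by simp)
    refine ⟨l1, m1, φ1, pos1, coord1, zr, ?_, ?_⟩
    · intro wq' hwq' hz u hu
      exact stage_two ha (e r) hwp hwq hpq φ0 pos0 coord0 φ1 pos1 coord1 hsat0 hsat1 hfin0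
        wq' hwq' (fun s t => lt_trans (hzrw s) (hz t)) u hu
    · intro wq' hwq'
      exact qs_finite_transfer ha (e r) φ1 pos1 coord1 hwq hwq'
        (qs_grd_finite_single hfin1)
  choose l1 m1 φ1 pos1 coord1 zr hsat hqsfin using hdata
  obtain ⟨z1, hz1⟩ := exists_upper_bound (Finset.image zr Finset.univ)
  have hz1r : ∀ r, zr r < z1 := fun r => hz1 _ (by simp)
  apply indisc_over_tuple ha e l1 m1 φ1 pos1 coord1 z1
  · intro r wq' hwq' hz u hu
    exact hsat r wq' hwq' (fun t => lt_trans (hz1r r) (hz t)) u hu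
  · exact hqsfin

end KernelIndisc
section Maximality

variable {M : Type w} [L.Structure M] {I : Type*} [LinearOrder I] {γ' : Type*}

/-- The class-guarded version of a formula. -/
noncomputable def guardF (x : Im L M) {m : ℕ} (φ : L.Formula (Fin x.n ⊕ Fin m)) :
    L.Formula (Fin x.n ⊕ Fin m) :=
  Formula.iAlls _
    ((x.E.relabel (Sum.elim (fun u => Sum.inl (Sum.inl u)) Sum.inr)).imp
      (φ.relabel (Sum.elim Sum.inr (fun t => Sum.inl (Sum.inr t)))))

lemma realize_guardF {x : Im L M} {m : ℕ} {φ : L.Formula (Fin x.n ⊕ Fin m)}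
    {u : Fin x.n → M} {v : Fin m → M} :
    (guardF x φ).Realize (Sum.elim u v) ↔
      ∀ u', x.E.Realize (Sum.elim u u') → φ.Realize (Sum.elim u' v) := by
  rw [guardF, Formula.realize_iAlls]
  refine forall_congr' fun u' => ?_
  rw [show (fun a => Sum.elim (Sum.elim u v) u' a) = Sum.elim (Sum.elim u v) u' by
    funext q; cases q <;> rfl]
  rw [Formula.realize_imp, Formula.realize_relabel, Formula.realize_relabel]
  rw [show (Sum.elim (Sum.elim u v) u') ∘ (Sum.elim
      (fun u => (Sum.inl (Sum.inl u) : (Fin x.n ⊕ Fin m) ⊕ Fin x.n)) Sum.inr)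
    = Sum.elim u u' by funext q; cases q <;> rfl]
  rw [show (Sum.elim (Sum.elim u v) u') ∘ (Sum.elim Sum.inr
      (fun t => (Sum.inl (Sum.inr t) : (Fin x.n ⊕ Fin m) ⊕ Fin x.n)))
    = Sum.elim u' v by funext q; cases q <;> rfl]

lemma guardF_invariant {x : Im L M} {m : ℕ} {φ : L.Formula (Fin x.n ⊕ Fin m)}
    {v : Fin m → M} {u u' : Fin x.n → M} (hE : x.E.Realize (Sum.elim u u')) :
    (guardF x φ).Realize (Sum.elim u v) ↔ (guardF x φ).Realize (Sum.elim u' v) := by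
  rw [realize_guardF, realize_guardF]
  constructor
  · intro h u'' hu''
    exact h u'' (x.isEqRel.2.2 _ _ _ hE hu'')
  · intro h u'' hu''
    exact h u'' (x.isEqRel.2.2 _ _ _ (x.isEqRel.2.1 _ _ hE) hu'')

lemma mem_kernel_of_indisc {a : I → γ' → M} (ha : IsIndiscernible (L := L) a)
    [Nonempty I] [NoMaxOrder I] (x : Im L M)
    (hx : InAclEq (L := L) (⋃ i : I, Set.range (a i)) x)
    (hind : IsIndiscernibleOverIm (L := L) (e1x (M := M) x) a) :
    x ∈ kernel (L := L) a := by
  classical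
  obtain ⟨m, c, φ, hcX, hinv, hsat, hfin⟩ := hx
  obtain ⟨l, wi, pos, coord, hwi, _, hceq⟩ := decomp_params a (Set.univ) c (by
    intro t
    have := hcX t
    simp only [Set.mem_iUnion, Set.mem_range] at this
    obtain ⟨i, g, hg⟩ := this
    exact ⟨i, Set.mem_univ i, g, hg.symm⟩)
  have hce : c = fun t => a (wi (pos t)) (coord t) := funext hceq
  rw [hce] at hinv hsat hfin
  clear hceq hcX
  obtain ⟨z, hz⟩ := exists_upper_bound (Finset.image wi Finset.univ)
  have hzw : ∀ s, wi s < z := fun s => hz _ (by simp)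
  obtain ⟨wj, hwj, hwjz⟩ := exists_strictMono_above (Fin l) z
  refine ⟨Set.range wi, Set.range wj, ?_, ?_, ?_⟩
  · rintro i ⟨s, rfl⟩ j ⟨t, rfl⟩
    exact lt_trans (hzw s) (hwjz t)
  · exact ⟨m, fun t => a (wi (pos t)) (coord t), φ, fun t => by
      simp only [Set.mem_iUnion, Set.mem_range]
      exact ⟨wi (pos t), ⟨pos t, rfl⟩, coord t, rfl⟩, hinv, hsat, hfin⟩
  · -- the right-hand witness, with the guarded formula
    obtain ⟨u0, hu0⟩ := x.cls_nonempty
    set c' : Fin m → M := fun t => a (wj (pos t)) (coord t) with hc'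
    set σ : Fin m → (Fin l × γ') := fun t => (pos t, coord t) with hσ
    set Θ : L.Formula ((Fin l × γ') ⊕ ImVars (e1x (M := M) x)) :=
      (toE1 x (guardF x φ)).relabel (Sum.map σ id) with hΘ
    have hrealΘ : ∀ (d : Fin l × γ' → M) (y : ImVars (e1x (M := M) x) → M),
        Θ.Realize (Sum.elim d y) ↔
          (guardF x φ).Realize (Sum.elim (fun nn => y ⟨0, nn⟩) (fun t => d (σ t))) := by
      intro d y
      rw [hΘ, Formula.realize_relabel]
      rw [show (Sum.elim d y) ∘ (Sum.map σ id) = Sum.elim (fun t => d (σ t)) y by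
        funext q; cases q <;> rfl]
      exact realize_toE1
    have hΘinv : ImInvariant (L := L) (e1x (M := M) x) Θ := by
      intro d cr cr' hcr hcr'
      rw [show (fun q : ImVars (e1x (M := M) x) => cr q.1 q.2) = repv _ cr from rfl,
        show (fun q : ImVars (e1x (M := M) x) => cr' q.1 q.2) = repv _ cr' from rfl,
        hrealΘ, hrealΘ]
      exact guardF_invariant (x.rel_of_mem (hcr 0) (hcr' 0))
    have hkey := hind l wi wj hwi hwj Θ hΘinv (fun _ => u0) (fun r => hu0)
    have hL : Θ.Realize (Sum.elim (fun p : Fin l × γ' => a (wi p.1) p.2)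
        (fun q : ImVars (e1x (M := M) x) => u0 q.2)) := by
      rw [hrealΘ, realize_guardF]
      intro u' hu'
      exact hsat u' (x.mem_of_rel hu0 hu')
    rw [show (fun q : ImVars (e1x (M := M) x) => (fun _ : Fin 1 => u0) q.1 q.2)
      = (fun q : ImVars (e1x (M := M) x) => u0 q.2) from rfl] at hkey
    have hR := hkey.1 hL
    rw [hrealΘ, realize_guardF] at hR
    have hGsat : ∀ u ∈ x.cls, (guardF x φ).Realize (Sum.elim u c') := by
      intro u hu
      rw [← guardF_invariant (v := c') (x.rel_of_mem hu0 hu)]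
      rw [realize_guardF]
      exact hR
    refine ⟨m, c', guardF x φ, fun t => by
        simp only [Set.mem_iUnion, Set.mem_range]
        exact ⟨wj (pos t), ⟨pos t, rfl⟩, coord t, rfl⟩,
      fun u u' hE => guardF_invariant hE, hGsat, ?_⟩
    -- finiteness
    have hqsw : (qs (e1x (M := M) x) (grd (e1x (M := M) x)
        (fun t => a (wi (pos t)) (coord t)) (toE1 x φ))).Finite :=
      qs_grd_finite_single hfin
    have hqswj := qs_finite_transfer ha x φ pos coord hwi hwj hqsw
    have hfin' := classes_finite_of_qs hqswj
    apply hfin'.subset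
    rintro D ⟨⟨b, rfl⟩, hD⟩
    refine ⟨⟨b, rfl⟩, fun u hu => ?_⟩
    have := hD u hu
    rw [realize_guardF] at this
    exact this u (x.isEqRel.1 u)

end Maximality
section FinalAssembly

variable {M : Type w} [L.Structure M]

lemma inAclEq_mono {X Y : Set M} {x : Im L M} (hXY : X ⊆ Y)
    (h : InAclEq (L := L) X x) : InAclEq (L := L) Y x := by
  obtain ⟨m, c, φ, hc, hinv, hsat, hfin⟩ := h
  exact ⟨m, c, φ, fun t => hXY (hc t), hinv, hsat, hfin⟩

end FinalAssembly
/-- In a sufficiently saturated model of a complete theory, the kernel of an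
indiscernible sequence `(aᵢ)_{i ∈ I}` (with `I` an infinite linear order without endpoints)
is the largest subset of `acl^eq((aᵢ)_{i ∈ I})` over which the sequence is indiscernible. -/
theorem kernel_isGreatest (hT : T.IsComplete)
    (M : Theory.ModelType.{u, v, max u v} T)
    {I : Type w'} [LinearOrder I] [Nonempty I] [NoMinOrder I] [NoMaxOrder I]
    {γ : Type (max u v)} [Finite γ]
    (a : I → γ → M) (ha : IsIndiscernible (L := L) a) :
    IsGreatest
      {K : Set (Im L ↥M) | K ⊆ {x : Im L ↥M | InAclEq (L := L) (⋃ i : I, range (a i)) x} ∧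
        IsIndiscernibleOverImSet (L := L) K a}
      (kernel (L := L) a) := by
  constructor
  · constructor
    · intro x hx
      obtain ⟨I0, I1, hcut, h0, h1⟩ := hx
      refine inAclEq_mono ?_ h0
      intro y hy
      simp only [Set.mem_iUnion, Set.mem_range] at hy ⊢
      obtain ⟨i, _, g, hg⟩ := hy
      exact ⟨i, g, hg⟩
    · exact kernel_indisc ha
  · rintro K ⟨hKsub, hKind⟩ x hxK
    exact mem_kernel_of_indisc ha x (hKsub hxK) (hKind 1 (fun _ => x) (fun _ => hxK))

end Equationality
end
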